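/- arXiv:1804.09972 — 6 statements merged into one kernel-verified Lean document; each statement's English description precedes it below -/
import Mathlib

section
/- For all integers m ≥ n ≥ 1, the optimal threshold factor R_{m,n} is an algebraic real number, i.e., R_{m,n} is a root of some nonzero polynomial with integer coefficients. -/
open Polynomial

noncomputable section

/-- A polynomial is absolutely monotonic on `[a, b]` if all of its derivatives
(including the 0th) are nonnegative at every point of `[a, b]`. -/
def AbsolutelyMonotonicOn (φ : Polynomial ℝ) (a b : ℝ) : Prop :=
  ∀ (k : ℕ), ∀ x ∈ Set.Icc a b, 0 ≤ (Polynomial.derivative^[k] φ).eval x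

/-- The set `Π_{m,n}` of real polynomials of degree at most `m` with
`φ^{(k)}(0) = 1` for `k = 0, 1, …, n`. -/
def PiSet (m n : ℕ) : Set (Polynomial ℝ) :=
  {φ : Polynomial ℝ | φ.natDegree ≤ m ∧ ∀ k ≤ n, (Polynomial.derivative^[k] φ).eval 0 = 1}

/-- The threshold factor `R(φ)`. -/
def thresholdFactor (φ : Polynomial ℝ) : ℝ :=
  sSup {r : ℝ | r = 0 ∨ (0 < r ∧ AbsolutelyMonotonicOn φ (-r) 0)}

/-- The optimal threshold factor `R_{m,n}`. -/
def Ropt (m n : ℕ) : ℝ :=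
  sSup (thresholdFactor '' PiSet m n)

namespace S3

open Matrix

/-- entries of the constraint matrix, as integer polynomials in `r` -/
def Apoly (k j : ℕ) : Polynomial ℤ :=
  C ((j.choose k * k.factorial : ℕ) : ℤ) * X ^ (j - k)

lemma aeval_Apoly (r : ℝ) (k j : ℕ) :
    aeval r (Apoly k j) = ((j.choose k * k.factorial : ℕ) : ℝ) * r ^ (j - k) := by
  simp [Apoly]

lemma eval_nonneg_of_coeff {p : Polynomial ℝ} {x : ℝ} (hx : 0 ≤ x)
    (h : ∀ i, 0 ≤ p.coeff i) : 0 ≤ p.eval x := by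
  rw [eval_eq_sum_range]
  exact Finset.sum_nonneg fun i _ => mul_nonneg (h i) (pow_nonneg hx i)

lemma iterate_derivative_coeff_nonneg {p : Polynomial ℝ} (h : ∀ i, 0 ≤ p.coeff i)
    (k i : ℕ) : 0 ≤ (derivative^[k] p).coeff i := by
  rw [coeff_iterate_derivative]
  exact nsmul_nonneg (h _) _

lemma eval_zero_iterate_derivative (p : Polynomial ℝ) (k : ℕ) :
    (derivative^[k] p).eval 0 = (k.factorial : ℝ) * p.coeff k := by
  rw [← coeff_zero_eq_eval_zero, coeff_iterate_derivative, zero_add, nsmul_eq_mul,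
    Nat.descFactorial_self, Nat.cast_comm]

lemma taylor_iterate_derivative (p : Polynomial ℝ) (r : ℝ) (k : ℕ) :
    derivative^[k] (taylor r p) = taylor r (derivative^[k] p) := by
  induction k with
  | zero => simp
  | succ k ih =>
      rw [Function.iterate_succ_apply', ih, Function.iterate_succ_apply']
      rw [taylor_apply, taylor_apply, derivative_comp]
      simp

/-- Characterization of absolute monotonicity via nonnegativity of the
coefficients of the Taylor shift. -/
lemma am_iff (ψ : Polynomial ℝ) (r : ℝ) (hr : 0 ≤ r) :
    AbsolutelyMonotonicOn (taylor r ψ) (-r) 0 ↔ ∀ k, 0 ≤ ψ.coeff k := by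
  constructor
  · intro h k
    have hm : (-r) ∈ Set.Icc (-r) (0:ℝ) := by
      constructor <;> simp [hr, neg_nonpos]
    have := h k (-r) hm
    rw [taylor_iterate_derivative, taylor_eval, neg_add_cancel,
      eval_zero_iterate_derivative] at this
    have hk : (0:ℝ) < (k.factorial : ℝ) := by positivity
    nlinarith
  · intro h k x hx
    rw [taylor_iterate_derivative, taylor_eval]
    refine eval_nonneg_of_coeff ?_ (iterate_derivative_coeff_nonneg h k)
    have := hx.1
    linarith


variable {m n : ℕ}

/-- The `b`-coefficient polynomial `∑ b j X^j`. -/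
def psiOf (m : ℕ) (b : Fin (m+1) → ℝ) : Polynomial ℝ :=
  ∑ j : Fin (m+1), C (b j) * X ^ (j : ℕ)

lemma psiOf_coeff (b : Fin (m+1) → ℝ) (j : Fin (m+1)) :
    (psiOf m b).coeff (j : ℕ) = b j := by
  rw [psiOf, finset_sum_coeff]
  rw [Finset.sum_eq_single j]
  · simp
  · intro i _ hij
    have : (j : ℕ) ≠ (i : ℕ) := fun h => hij (Fin.ext h.symm)
    simp [coeff_C_mul, coeff_X_pow, this]
  · simp

lemma psiOf_coeff_ge (b : Fin (m+1) → ℝ) {k : ℕ} (hk : m + 1 ≤ k) :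
    (psiOf m b).coeff k = 0 := by
  rw [psiOf, finset_sum_coeff]
  apply Finset.sum_eq_zero
  intro i _
  have : k ≠ (i : ℕ) := by omega
  simp [coeff_C_mul, coeff_X_pow, this]

lemma psiOf_natDegree (b : Fin (m+1) → ℝ) : (psiOf m b).natDegree ≤ m := by
  refine natDegree_sum_le_of_forall_le _ _ fun i _ => ?_
  refine (natDegree_C_mul_le _ _).trans ?_
  exact (natDegree_X_pow_le (i : ℕ)).trans (Nat.lt_succ_iff.mp i.isLt)

/-- evaluation of derivatives at 0 of the shifted polynomial. -/
lemma eval_deriv_taylor (ψ : Polynomial ℝ) (hψ : ψ.natDegree < m + 1) (r : ℝ) (k : ℕ) :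
    (derivative^[k] (taylor r ψ)).eval 0
      = ∑ j : Fin (m+1), ψ.coeff (j : ℕ) * aeval r (Apoly k (j : ℕ)) := by
  rw [eval_zero_iterate_derivative]
  have hexp : taylor r ψ = ∑ j ∈ Finset.range (m+1), C (ψ.coeff j) * (X + C r) ^ j := by
    rw [taylor_apply, comp_eq_sum_left, sum_over_range' _ (by simp) _ hψ]
  rw [hexp, finset_sum_coeff]
  simp only [coeff_C_mul, coeff_X_add_C_pow]
  rw [Finset.mul_sum, ← Fin.sum_univ_eq_sum_range
    (fun j => (k.factorial : ℝ) * (ψ.coeff j * (r ^ (j - k) * (j.choose k : ℝ))))]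
  refine Finset.sum_congr rfl fun j _ => ?_
  rw [aeval_Apoly]
  push_cast
  ring

/-- Feasibility of the linear program at radius `r`. -/
def Feas (m n : ℕ) (r : ℝ) : Prop :=
  ∃ b : Fin (m+1) → ℝ, (∀ j, 0 ≤ b j) ∧
    ∀ k : Fin (n+1), ∑ j : Fin (m+1), b j * aeval r (Apoly (k : ℕ) (j : ℕ)) = 1

lemma P1 {r : ℝ} (hr : 0 ≤ r) (hf : Feas m n r) :
    ∃ φ ∈ PiSet m n, AbsolutelyMonotonicOn φ (-r) 0 := by
  obtain ⟨b, hb0, hbe⟩ := hf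
  refine ⟨taylor r (psiOf m b), ⟨?_, ?_⟩, ?_⟩
  · rw [natDegree_taylor]; exact psiOf_natDegree b
  · intro k hk
    rw [eval_deriv_taylor _ (Nat.lt_succ_of_le (psiOf_natDegree b))]
    have := hbe ⟨k, Nat.lt_succ_of_le hk⟩
    simpa only [psiOf_coeff] using this
  · rw [am_iff _ _ hr]
    intro k
    by_cases hk : k < m + 1
    · rw [show k = ((⟨k, hk⟩ : Fin (m+1)) : ℕ) from rfl, psiOf_coeff]
      exact hb0 _
    · rw [psiOf_coeff_ge b (by omega)]

lemma P2 {φ : Polynomial ℝ} (hφ : φ ∈ PiSet m n) {r : ℝ} (hr : 0 ≤ r)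
    (ham : AbsolutelyMonotonicOn φ (-r) 0) : Feas m n r := by
  set ψ := taylor (-r) φ with hψdef
  have hφψ : φ = taylor r ψ := by
    rw [hψdef, taylor_taylor, add_neg_cancel, taylor_zero]
  refine ⟨fun j => ψ.coeff (j : ℕ), ?_, ?_⟩
  · intro j
    exact ((am_iff ψ r hr).mp (hφψ ▸ ham)) (j : ℕ)
  · intro k
    have hd : ψ.natDegree < m + 1 := by
      rw [hψdef, natDegree_taylor]; exact Nat.lt_succ_of_le hφ.1
    rw [← eval_deriv_taylor ψ hd r (k : ℕ), ← hφψ]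
    exact hφ.2 (k : ℕ) (Nat.lt_succ_iff.mp k.isLt)


def Sphi (φ : Polynomial ℝ) : Set ℝ :=
  {r : ℝ | r = 0 ∨ (0 < r ∧ AbsolutelyMonotonicOn φ (-r) 0)}

lemma thresholdFactor_def (φ : Polynomial ℝ) : thresholdFactor φ = sSup (Sphi φ) := rfl

lemma zero_mem_Sphi (φ : Polynomial ℝ) : (0:ℝ) ∈ Sphi φ := Or.inl rfl

lemma Sphi_nonneg {φ : Polynomial ℝ} {r : ℝ} (hr : r ∈ Sphi φ) : 0 ≤ r := by
  rcases hr with h | h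
  · exact h.ge
  · exact h.1.le

/-- the basic a-priori bound: every threshold radius is at most `m`. -/
lemma Sphi_le (hn : 1 ≤ n) (hmn : n ≤ m) {φ : Polynomial ℝ} (hφ : φ ∈ PiSet m n)
    {r : ℝ} (hr : r ∈ Sphi φ) : r ≤ m := by
  rcases hr with h | ⟨hr0, ham⟩
  · simp [h]
  obtain ⟨b, hb0, hbe⟩ := P2 hφ hr0.le ham
  have e0 := hbe ⟨0, by omega⟩
  have e1 := hbe ⟨1, by omega⟩
  simp only [aeval_Apoly] at e0 e1
  -- e0 : ∑ j, b j * (1 * r ^ j) = 1, e1 : ∑ j, b j * (j * r^(j-1)) = 1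
  have key : ∀ j : Fin (m+1),
      (b j * (((j:ℕ).choose 1 * Nat.factorial 1 : ℕ) : ℝ) * r ^ ((j:ℕ) - 1)) * r
        ≤ (m : ℝ) * (b j * (((j:ℕ).choose 0 * Nat.factorial 0 : ℕ) : ℝ) * r ^ ((j:ℕ) - 0)) := by
    intro j
    have hc0 : (((j:ℕ).choose 0 * Nat.factorial 0 : ℕ) : ℝ) = 1 := by simp
    have hc1 : (((j:ℕ).choose 1 * Nat.factorial 1 : ℕ) : ℝ) = ((j:ℕ) : ℝ) := by simp
    rw [hc0, hc1, Nat.sub_zero, mul_one]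
    have hnn : 0 ≤ b j * r ^ (j:ℕ) := mul_nonneg (hb0 j) (pow_nonneg hr0.le _)
    rcases Nat.eq_zero_or_pos (j : ℕ) with hj | hj
    · rw [hj]
      simp only [Nat.cast_zero, mul_zero, zero_mul, pow_zero]
      have : 0 ≤ (m:ℝ) * (b j * 1) := by
        have := hb0 j
        positivity
      simpa using this
    · have hjr : r ^ ((j:ℕ) - 1) * r = r ^ (j : ℕ) := by
        rw [← pow_succ]
        congr 1
        omega
      have hjm : ((j:ℕ) : ℝ) ≤ (m : ℝ) := by
        exact_mod_cast Nat.lt_succ_iff.mp j.isLt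
      calc b j * ((j:ℕ):ℝ) * r ^ ((j:ℕ)-1) * r = ((j:ℕ):ℝ) * (b j * r ^ (j:ℕ)) := by
            rw [mul_assoc, mul_assoc, hjr]; ring
        _ ≤ (m:ℝ) * (b j * r ^ (j:ℕ)) := mul_le_mul_of_nonneg_right hjm hnn
  have : r = ∑ j : Fin (m+1),
      (b j * (((j:ℕ).choose 1 * Nat.factorial 1 : ℕ):ℝ) * r ^ ((j:ℕ) - 1)) * r := by
    rw [← Finset.sum_mul]
    have : ∑ j : Fin (m+1), b j * (((j:ℕ).choose 1 * Nat.factorial 1:ℕ):ℝ) * r ^ ((j:ℕ)-1) = 1 := by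
      rw [← e1]; refine Finset.sum_congr rfl fun j _ => by ring
    rw [this, one_mul]
  rw [this]
  calc _ ≤ ∑ j : Fin (m+1), (m:ℝ) * (b j * (((j:ℕ).choose 0 * Nat.factorial 0:ℕ):ℝ) * r ^ ((j:ℕ)-0)) :=
        Finset.sum_le_sum fun j _ => key j
    _ = (m:ℝ) := by
        rw [← Finset.mul_sum]
        have : ∑ j : Fin (m+1), b j * (((j:ℕ).choose 0 * Nat.factorial 0:ℕ):ℝ) * r ^ ((j:ℕ)-0) = 1 := by
          rw [← e0]; refine Finset.sum_congr rfl fun j _ => by ring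
        rw [this, mul_one]

lemma thresholdFactor_nonneg (φ : Polynomial ℝ) : 0 ≤ thresholdFactor φ :=
  Real.sSup_nonneg fun _ hx => Sphi_nonneg hx

lemma Sphi_bddAbove (hn : 1 ≤ n) (hmn : n ≤ m) {φ : Polynomial ℝ} (hφ : φ ∈ PiSet m n) :
    BddAbove (Sphi φ) := ⟨m, fun _ hr => Sphi_le hn hmn hφ hr⟩

lemma thresholdFactor_le (hn : 1 ≤ n) (hmn : n ≤ m) {φ : Polynomial ℝ} (hφ : φ ∈ PiSet m n) :
    thresholdFactor φ ≤ m :=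
  csSup_le ⟨0, zero_mem_Sphi φ⟩ fun _ hr => Sphi_le hn hmn hφ hr

lemma image_bddAbove (hn : 1 ≤ n) (hmn : n ≤ m) :
    BddAbove (thresholdFactor '' PiSet m n) := by
  refine ⟨m, fun x hx => ?_⟩
  obtain ⟨φ, hφ, rfl⟩ := hx
  exact thresholdFactor_le hn hmn hφ

/-- the truncated exponential, an explicit element of `PiSet`. -/
def expPoly (n : ℕ) : Polynomial ℝ :=
  ∑ i ∈ Finset.range (n+1), C ((i.factorial : ℝ)⁻¹) * X ^ i

lemma expPoly_mem (hmn : n ≤ m) : expPoly n ∈ PiSet m n := by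
  constructor
  · refine (natDegree_sum_le_of_forall_le _ _ fun i hi => ?_).trans hmn
    exact (natDegree_C_mul_le _ _).trans ((natDegree_X_pow_le i).trans
      (Nat.lt_succ_iff.mp (Finset.mem_range.mp hi)))
  · intro k hk
    rw [eval_zero_iterate_derivative, expPoly, finset_sum_coeff]
    rw [Finset.sum_eq_single k]
    · simp [Nat.factorial_ne_zero]
    · intro i _ hik
      simp [coeff_C_mul, coeff_X_pow, Ne.symm hik]
    · intro h
      exact absurd (Finset.mem_range.mpr (by omega)) h

lemma image_nonempty (hmn : n ≤ m) : (thresholdFactor '' PiSet m n).Nonempty :=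
  ⟨_, Set.mem_image_of_mem _ (expPoly_mem hmn)⟩

lemma Ropt_nonneg (hn : 1 ≤ n) (hmn : n ≤ m) : 0 ≤ Ropt m n :=
  (thresholdFactor_nonneg (expPoly n)).trans
    (le_csSup (image_bddAbove hn hmn) (Set.mem_image_of_mem _ (expPoly_mem hmn)))

lemma T4 (hn : 1 ≤ n) (hmn : n ≤ m) {r : ℝ} (hr0 : 0 < r) (hr : r < Ropt m n) :
    Feas m n r := by
  obtain ⟨x, hx, hrx⟩ := exists_lt_of_lt_csSup (image_nonempty hmn) hr
  obtain ⟨φ, hφ, rfl⟩ := hx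
  rw [thresholdFactor_def] at hrx
  obtain ⟨r', hr', hrr'⟩ := exists_lt_of_lt_csSup ⟨0, zero_mem_Sphi φ⟩ hrx
  rcases hr' with h | ⟨_, ham⟩
  · exfalso
    rw [h] at hrr'
    linarith
  · refine P2 hφ hr0.le ?_
    intro k x hx
    exact ham k x ⟨by linarith [hx.1], hx.2⟩

lemma T5 (hn : 1 ≤ n) (hmn : n ≤ m) {r : ℝ} (hr : Ropt m n < r) : ¬ Feas m n r := by
  intro hf
  have hr0 : 0 ≤ r := (Ropt_nonneg hn hmn).trans hr.le
  obtain ⟨φ, hφ, ham⟩ := P1 hr0 hf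
  have hrS : r ∈ Sphi φ := by
    rcases eq_or_lt_of_le hr0 with h | h
    · exact Or.inl h.symm
    · exact Or.inr ⟨h, ham⟩
  have h1 : r ≤ thresholdFactor φ := le_csSup (Sphi_bddAbove hn hmn hφ) hrS
  have h2 : thresholdFactor φ ≤ Ropt m n :=
    le_csSup (image_bddAbove hn hmn) (Set.mem_image_of_mem _ hφ)
  linarith


section Cara

variable {ι d : Type*} [Fintype ι] [DecidableEq ι] [Fintype d]

lemma caraAux (v : ι → d → ℝ) (e : d → ℝ) :
    ∀ (N : ℕ) (S : Finset ι) (b : ι → ℝ), S.card ≤ N → (∀ i, 0 ≤ b i) →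
      (∀ i ∉ S, b i = 0) → (∀ k, ∑ i, b i * v i k = e k) →
    ∃ (S' : Finset ι) (c : ι → ℝ), (∀ i, 0 ≤ c i) ∧ (∀ i ∉ S', c i = 0) ∧
      (∀ k, ∑ i, c i * v i k = e k) ∧
      (∀ g : ι → ℝ, (∀ i ∉ S', g i = 0) → (∀ k, ∑ i, g i * v i k = 0) → g = 0) := by
  intro N
  induction N with
  | zero =>
      intro S b hcard hb0 hbS hbe
      have hS : S = ∅ := Finset.card_eq_zero.mp (Nat.le_zero.mp hcard)
      refine ⟨∅, b, hb0, fun i _ => hbS i (by simp [hS]), hbe, ?_⟩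
      intro g hg _
      funext i
      exact hg i (by simp)
  | succ N ih =>
      intro S b hcard hb0 hbS hbe
      by_cases hind : ∀ g : ι → ℝ, (∀ i ∉ S, g i = 0) → (∀ k, ∑ i, g i * v i k = 0) → g = 0
      · exact ⟨S, b, hb0, hbS, hbe, hind⟩
      push_neg at hind
      obtain ⟨g, hgS, hge, hgne⟩ := hind
      -- WLOG there is an index with positive g value
      have hpos : ∃ g' : ι → ℝ, (∀ i ∉ S, g' i = 0) ∧ (∀ k, ∑ i, g' i * v i k = 0) ∧
          ∃ i0, 0 < g' i0 := by
        have : ∃ i0, g i0 ≠ 0 := by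
          by_contra hc
          push_neg at hc
          exact hgne (funext hc)
        obtain ⟨i0, hi0⟩ := this
        rcases lt_or_gt_of_ne hi0 with h | h
        · refine ⟨-g, fun i hi => by simp [hgS i hi], fun k => ?_, ⟨i0, by simpa using h⟩⟩
          simpa [neg_mul, Finset.sum_neg_distrib] using congrArg Neg.neg (hge k)
        · exact ⟨g, hgS, hge, ⟨i0, h⟩⟩
      obtain ⟨g, hgS, hge, i0, hi0⟩ := hpos
      set P : Finset ι := S.filter (fun i => 0 < g i) with hP
      have hi0S : i0 ∈ S := by
        by_contra hc
        rw [hgS i0 hc] at hi0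
        exact lt_irrefl _ hi0
      have hPne : P.Nonempty := ⟨i0, by simp [hP, hi0S, hi0]⟩
      obtain ⟨i1, hi1P, hi1min⟩ := P.exists_min_image (fun i => b i / g i) hPne
      have hi1S : i1 ∈ S := (Finset.mem_filter.mp hi1P).1
      have hgi1 : 0 < g i1 := (Finset.mem_filter.mp hi1P).2
      set τ := b i1 / g i1 with hτ
      have hτ0 : 0 ≤ τ := div_nonneg (hb0 i1) hgi1.le
      set c : ι → ℝ := fun i => b i - τ * g i with hc
      have hc0 : ∀ i, 0 ≤ c i := by
        intro i
        rcases le_or_gt (g i) 0 with h | h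
        · have : τ * g i ≤ 0 := mul_nonpos_of_nonneg_of_nonpos hτ0 h
          simp only [hc]
          linarith [hb0 i]
        · have hiS : i ∈ S := by
            by_contra hcS
            rw [hgS i hcS] at h
            exact lt_irrefl _ h
          have hiP : i ∈ P := Finset.mem_filter.mpr ⟨hiS, h⟩
          have := hi1min i hiP
          have : τ * g i ≤ b i := by
            rw [hτ]
            calc b i1 / g i1 * g i ≤ b i / g i * g i :=
                  mul_le_mul_of_nonneg_right this h.le
              _ = b i := div_mul_cancel₀ _ h.ne'
          simp only [hc]
          linarith
      have hci1 : c i1 = 0 := by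
        simp only [hc, hτ]
        field_simp
        ring
      have hcS : ∀ i ∉ S.erase i1, c i = 0 := by
        intro i hi
        rw [Finset.mem_erase] at hi
        push_neg at hi
        by_cases h : i = i1
        · rw [h]; exact hci1
        · have hiS : i ∉ S := hi h
          simp only [hc, hbS i hiS, hgS i hiS, mul_zero, sub_zero]
      have hce : ∀ k, ∑ i, c i * v i k = e k := by
        intro k
        have : ∑ i, c i * v i k = (∑ i, b i * v i k) - τ * ∑ i, g i * v i k := by
          rw [Finset.mul_sum, ← Finset.sum_sub_distrib]
          refine Finset.sum_congr rfl fun i _ => by simp [hc]; ring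
        rw [this, hge k, hbe k, mul_zero, sub_zero]
      have hcard' : (S.erase i1).card ≤ N := by
        have := Finset.card_erase_of_mem hi1S
        omega
      exact ih (S.erase i1) c hcard' hc0 hcS hce

lemma cara (v : ι → d → ℝ) (e : d → ℝ) (b : ι → ℝ) (hb0 : ∀ i, 0 ≤ b i)
    (hbe : ∀ k, ∑ i, b i * v i k = e k) :
    ∃ (S' : Finset ι) (c : ι → ℝ), (∀ i, 0 ≤ c i) ∧ (∀ i ∉ S', c i = 0) ∧
      (∀ k, ∑ i, c i * v i k = e k) ∧
      (∀ g : ι → ℝ, (∀ i ∉ S', g i = 0) → (∀ k, ∑ i, g i * v i k = 0) → g = 0) :=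
  caraAux v e Finset.univ.card Finset.univ b le_rfl hb0 (fun i hi => absurd (Finset.mem_univ i) hi) hbe

end Cara

def Works (m n : ℕ) (S : Finset (Fin (m+1))) (r : ℝ) : Prop :=
  ∃ c : Fin (m+1) → ℝ, (∀ j, 0 ≤ c j) ∧ (∀ j ∉ S, c j = 0) ∧
    (∀ k : Fin (n+1), ∑ j, c j * aeval r (Apoly (k:ℕ) (j:ℕ)) = 1) ∧
    (∀ g : Fin (m+1) → ℝ, (∀ j ∉ S, g j = 0) →
       (∀ k : Fin (n+1), ∑ j, g j * aeval r (Apoly (k:ℕ) (j:ℕ)) = 0) → g = 0)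

def Amat (m n : ℕ) (S : Finset (Fin (m+1))) :
    Matrix (Fin (n+1)) {x // x ∈ S} (Polynomial ℤ) :=
  fun k j => Apoly (k : ℕ) ((j : Fin (m+1)) : ℕ)

def Nmat (m n : ℕ) (S : Finset (Fin (m+1))) :
    Matrix {x // x ∈ S} {x // x ∈ S} (Polynomial ℤ) :=
  (Amat m n S)ᵀ * Amat m n S

def Dpoly (m n : ℕ) (S : Finset (Fin (m+1))) : Polynomial ℤ := (Nmat m n S).det

def Gvec (m n : ℕ) (S : Finset (Fin (m+1))) : {x // x ∈ S} → Polynomial ℤ :=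
  Matrix.cramer (Nmat m n S) ((Amat m n S)ᵀ *ᵥ (fun _ => 1))

def Hpoly (m n : ℕ) (S : Finset (Fin (m+1))) (k : Fin (n+1)) : Polynomial ℤ :=
  (∑ j : {x // x ∈ S}, Amat m n S k j * Gvec m n S j) - Dpoly m n S

section maps

variable (r : ℝ)

/-- `aeval r` as a ring homomorphism. -/
def evalRH (r : ℝ) : Polynomial ℤ →+* ℝ := (aeval r : Polynomial ℤ →ₐ[ℤ] ℝ).toRingHom

lemma evalRH_apply (p : Polynomial ℤ) : evalRH r p = aeval r p := rfl

lemma map_mulVec {α β : Type*} [Fintype β] (M : Matrix α β (Polynomial ℤ))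
    (v : β → Polynomial ℤ) :
    (M.map (evalRH r)) *ᵥ (fun j => evalRH r (v j)) = fun k => evalRH r ((M *ᵥ v) k) := by
  funext k
  simp [Matrix.mulVec, dotProduct, Matrix.map_apply, map_sum]

end maps

lemma works_vals {S : Finset (Fin (m+1))} {r : ℝ} (hw : Works m n S r) :
    aeval r (Dpoly m n S) ≠ 0 ∧
    (∀ k : Fin (n+1), aeval r (Hpoly m n S k) = 0) ∧
    (∀ j : {x // x ∈ S}, 0 ≤ aeval r (Gvec m n S j * Dpoly m n S)) := by
  obtain ⟨c, hc0, hcS, hce, hind⟩ := hw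
  set f := evalRH r with hf
  set AR := (Amat m n S).map f with hAR
  set cS : {x // x ∈ S} → ℝ := fun j => c j with hcSdef
  -- the real constraint equation
  have h1 : AR *ᵥ cS = fun _ => 1 := by
    funext k
    have := hce k
    rw [← this]
    show ∑ j : {x // x ∈ S}, AR k j * c j = ∑ j : Fin (m+1), c j * aeval r (Apoly (k:ℕ) (j:ℕ))
    rw [← Finset.sum_subset S.subset_univ
      (fun x _ hx => by rw [hcS x hx, zero_mul] :
        ∀ x ∈ Finset.univ, x ∉ S → c x * aeval r (Apoly (k:ℕ) (x:ℕ)) = 0)]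
    rw [← Finset.sum_coe_sort S (fun j => c j * aeval r (Apoly (k:ℕ) (j:ℕ)))]
    exact Finset.sum_congr rfl fun j _ => mul_comm _ _
  -- injectivity of AR on vectors
  have hinj0 : ∀ z : {x // x ∈ S} → ℝ, AR *ᵥ z = 0 → z = 0 := by
    intro z hz
    set zh : Fin (m+1) → ℝ := fun j => if h : j ∈ S then z ⟨j, h⟩ else 0 with hzh
    have hzhS : ∀ j ∉ S, zh j = 0 := fun j hj => dif_neg hj
    have hzhe : ∀ k : Fin (n+1), ∑ j, zh j * aeval r (Apoly (k:ℕ) (j:ℕ)) = 0 := by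
      intro k
      rw [← Finset.sum_subset S.subset_univ
        (fun x _ hx => by rw [hzhS x hx, zero_mul] :
          ∀ x ∈ Finset.univ, x ∉ S → zh x * aeval r (Apoly (k:ℕ) (x:ℕ)) = 0)]
      rw [← Finset.sum_coe_sort S (fun j => zh j * aeval r (Apoly (k:ℕ) (j:ℕ)))]
      have : ∀ j : {x // x ∈ S}, zh (j : Fin (m+1)) = z j := by
        intro j; exact dif_pos j.2
      rw [show (0:ℝ) = (AR *ᵥ z) k from (congrFun hz k).symm]
      exact Finset.sum_congr rfl fun j _ => by rw [this j]; exact mul_comm _ _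
    have := hind zh hzhS hzhe
    funext j
    have hj : zh (j : Fin (m+1)) = 0 := by
      simpa using congrFun this (j : Fin (m+1))
    rw [hzh] at hj
    simp only [dif_pos j.2] at hj
    simpa using hj
  set NR := ARᵀ * AR with hNR
  have hNinj : ∀ z : {x // x ∈ S} → ℝ, NR *ᵥ z = 0 → z = 0 := by
    intro z hz
    apply hinj0
    have h2 : (AR *ᵥ z) ⬝ᵥ (AR *ᵥ z) = 0 := by
      have e1 : ARᵀ *ᵥ (AR *ᵥ z) = NR *ᵥ z := Matrix.mulVec_mulVec z ARᵀ AR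
      calc (AR *ᵥ z) ⬝ᵥ (AR *ᵥ z) = z ⬝ᵥ (ARᵀ *ᵥ (AR *ᵥ z)) := by
            rw [Matrix.dotProduct_mulVec z ARᵀ (AR *ᵥ z), Matrix.vecMul_transpose]
        _ = z ⬝ᵥ (0 : {x // x ∈ S} → ℝ) := by rw [e1, hz]
        _ = 0 := dotProduct_zero z
    exact dotProduct_self_eq_zero.mp h2
  -- determinant of the Gram matrix is nonzero
  have hdet : NR.det ≠ 0 := by
    intro h0
    obtain ⟨w, hw0, hww⟩ := Matrix.exists_mulVec_eq_zero_iff.mpr h0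
    exact hw0 (hNinj w hww)
  have hNmap : (Nmat m n S).map f = NR := by
    rw [Nmat, Matrix.map_mul, Matrix.transpose_map, hNR, hAR]
  have hDdet : aeval r (Dpoly m n S) = NR.det := by
    have h := RingHom.map_det f (Nmat m n S)
    rw [RingHom.mapMatrix_apply] at h
    rw [Dpoly, ← hNmap]
    exact h
  have hD : aeval r (Dpoly m n S) ≠ 0 := by rw [hDdet]; exact hdet
  -- Cramer identity transported to ℝ
  have hcram : NR *ᵥ (fun j => f (Gvec m n S j)) =
      (f (Dpoly m n S)) • (ARᵀ *ᵥ (fun _ => 1)) := by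
    have base : Nmat m n S *ᵥ Gvec m n S = Dpoly m n S • ((Amat m n S)ᵀ *ᵥ fun _ => 1) :=
      Matrix.mulVec_cramer (Nmat m n S) ((Amat m n S)ᵀ *ᵥ fun _ => 1)
    have hm := map_mulVec r (Nmat m n S) (Gvec m n S)
    rw [hNmap] at hm
    rw [hm]
    funext j
    rw [base]
    show f ((Dpoly m n S • ((Amat m n S)ᵀ *ᵥ fun _ => 1)) j) = _
    have hm2 := congrFun (map_mulVec r ((Amat m n S)ᵀ) (fun _ => 1)) j
    simp only [_root_.map_one] at hm2
    simp only [Pi.smul_apply, smul_eq_mul, _root_.map_mul]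
    rw [← hm2, Matrix.transpose_map, ← hAR]
  -- uniqueness gives the Cramer formula for c
  have huniq : (fun j => f (Gvec m n S j)) = (f (Dpoly m n S)) • cS := by
    have h3 : NR *ᵥ ((f (Dpoly m n S)) • cS) = (f (Dpoly m n S)) • (ARᵀ *ᵥ (fun _ => 1)) := by
      rw [Matrix.mulVec_smul]
      congr 1
      rw [← Matrix.mulVec_mulVec cS ARᵀ AR, h1]
    have h4 : NR *ᵥ ((fun j => f (Gvec m n S j)) - (f (Dpoly m n S)) • cS) = 0 := by
      rw [Matrix.mulVec_sub, hcram, h3, sub_self]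
    have h5 := hNinj _ h4
    have := sub_eq_zero.mp h5
    exact this
  have hGc : ∀ j : {x // x ∈ S}, aeval r (Gvec m n S j) = aeval r (Dpoly m n S) * c j := by
    intro j
    have := congrFun huniq j
    simpa [hf, evalRH_apply, hcSdef] using this
  refine ⟨hD, ?_, ?_⟩
  · intro k
    have hH : aeval r (Hpoly m n S k) =
        (∑ j : {x // x ∈ S}, aeval r (Amat m n S k j) * aeval r (Gvec m n S j))
          - aeval r (Dpoly m n S) := by
      rw [Hpoly, map_sub, map_sum]
      simp only [_root_.map_mul]
    have hAc : ∑ j : {x // x ∈ S}, aeval r (Amat m n S k j) * c j = 1 := by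
      have h2 := congrFun h1 k
      simpa [hf, hAR, hcSdef, Matrix.mulVec, dotProduct, Matrix.map_apply,
        evalRH_apply] using h2
    rw [hH]
    have h3 : ∑ j : {x // x ∈ S}, aeval r (Amat m n S k j) * aeval r (Gvec m n S j)
        = aeval r (Dpoly m n S) * ∑ j : {x // x ∈ S}, aeval r (Amat m n S k j) * c j := by
      rw [Finset.mul_sum]
      refine Finset.sum_congr rfl fun j _ => ?_
      rw [hGc j]
      ring
    rw [h3, hAc, mul_one, sub_self]
  · intro j
    have h4 : aeval r (Gvec m n S j * Dpoly m n S) = c j * (aeval r (Dpoly m n S))^2 := by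
      rw [_root_.map_mul, hGc j]; ring
    rw [h4]
    exact mul_nonneg (hc0 j) (sq_nonneg _)


lemma aeval_eq_eval_map (t : ℝ) (p : Polynomial ℤ) :
    aeval t p = (p.map (Int.castRingHom ℝ)).eval t := by
  rw [eval_map, aeval_def, algebraMap_int_eq]

lemma sign_const {f : Polynomial ℝ} {a b : ℝ} (hab : a ≤ b)
    (hroot : ∀ x ∈ Set.Icc a b, f.eval x ≠ 0) (ha : 0 < f.eval a) : 0 < f.eval b := by
  by_contra h
  push_neg at h
  have hb : f.eval b < 0 := lt_of_le_of_ne h (hroot b ⟨hab, le_rfl⟩)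
  have him := intermediate_value_Icc' hab
    ((f.continuous_aeval).continuousOn : ContinuousOn (fun x => f.eval x) (Set.Icc a b))
  obtain ⟨x, hx, hfx⟩ := him ⟨hb.le, ha.le⟩
  exact hroot x hx hfx

lemma rootfree (W : Polynomial ℝ) (hWne : W ≠ 0) (R : ℝ) (hR : W.eval R ≠ 0) :
    ∃ δ > 0, ∀ t, |t - R| < δ → W.eval t ≠ 0 := by
  have hfin : {x | W.IsRoot x}.Finite := W.finite_setOf_isRoot hWne
  set T : Finset ℝ := (hfin.toFinset).image (fun z => |z - R|) with hT
  refine ⟨(insert (1:ℝ) T).min' (Finset.insert_nonempty _ _), ?_, ?_⟩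
  · show (0:ℝ) < _
    rw [Finset.lt_min'_iff]
    intro y hy
    rcases Finset.mem_insert.mp hy with h | h
    · rw [h]; norm_num
    · obtain ⟨z, hz, rfl⟩ := Finset.mem_image.mp h
      have hzR : z ≠ R := by
        intro e
        apply hR
        have := (Set.Finite.mem_toFinset hfin).mp hz
        rwa [e] at this
      exact abs_pos.mpr (sub_ne_zero.mpr hzR)
  · intro t ht hroot
    have hmem : |t - R| ∈ T :=
      Finset.mem_image.mpr ⟨t, (Set.Finite.mem_toFinset hfin).mpr hroot, rfl⟩
    have := Finset.min'_le (insert (1:ℝ) T) (|t - R|) (Finset.mem_insert_of_mem hmem)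
    linarith

lemma infinite_of_approach {Z : Set ℝ} {R : ℝ} (hR0 : 0 < R) (hZR : ∀ r ∈ Z, r < R)
    (hnear : ∀ ε > 0, ∃ r ∈ Z, R - ε < r) : Z.Infinite := by
  by_contra h
  rw [Set.not_infinite] at h
  obtain ⟨r0, hr0Z, _⟩ := hnear R hR0
  have hne : h.toFinset.Nonempty := ⟨r0, h.mem_toFinset.mpr hr0Z⟩
  set M := h.toFinset.max' hne with hM
  have hMZ : M ∈ Z := h.mem_toFinset.mp (h.toFinset.max'_mem hne)
  have hMR : M < R := hZR M hMZ
  obtain ⟨r1, hr1Z, hr1⟩ := hnear (R - M) (by linarith)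
  have : r1 ≤ M := h.toFinset.le_max' r1 (h.mem_toFinset.mpr hr1Z)
  linarith

lemma works_of_feas {r : ℝ} (hf : Feas m n r) : ∃ S, Works m n S r := by
  obtain ⟨b, hb0, hbe⟩ := hf
  obtain ⟨S, c, hc0, hcS, hce, hind⟩ :=
    cara (fun (j : Fin (m+1)) (k : Fin (n+1)) => aeval r (Apoly (k:ℕ) (j:ℕ)))
      (fun _ => 1) b hb0 hbe
  exact ⟨S, c, hc0, hcS, hce, hind⟩

end S3

theorem statement3 (m n : ℕ) (hn : 1 ≤ n) (hmn : n ≤ m) :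
    ∃ q : Polynomial ℤ, q ≠ 0 ∧ Polynomial.aeval (Ropt m n) q = 0 := by
  by_contra hcon
  push_neg at hcon
  set R := Ropt m n with hR
  have hR0 : 0 < R := by
    rcases eq_or_lt_of_le (S3.Ropt_nonneg hn hmn) with h | h
    · exfalso
      refine hcon X X_ne_zero ?_
      rw [show R = 0 from hR.trans h.symm]
      simp
    · exact h
  -- pigeonhole: some support set works arbitrarily close to R
  have hnear : ∃ S : Finset (Fin (m+1)), ∀ ε > 0,
      ∃ r, (S3.Works m n S r ∧ 0 < r ∧ r < R) ∧ R - ε < r := by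
    by_contra hc
    push_neg at hc
    choose εf hεf using hc
    obtain ⟨Smin, _, hSmin⟩ := Finset.exists_min_image Finset.univ εf ⟨∅, Finset.mem_univ _⟩
    set ε := εf Smin with hε
    have hε0 : 0 < ε := (hεf Smin).1
    set r : ℝ := max (R - ε/2) (R/2) with hrdef
    have hr0 : 0 < r := lt_max_of_lt_right (by linarith)
    have hrR : r < R := max_lt (by linarith) (by linarith)
    obtain ⟨S, hS⟩ := S3.works_of_feas (S3.T4 hn hmn hr0 (hR ▸ hrR))
    have h1 : r ≤ R - εf S := (hεf S).2 r ⟨hS, hr0, hrR⟩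
    have h2 : ε ≤ εf S := hSmin S (Finset.mem_univ S)
    have h3 : R - ε/2 ≤ r := le_max_left _ _
    linarith
  obtain ⟨S, hSnear⟩ := hnear
  set Z := {r : ℝ | S3.Works m n S r ∧ 0 < r ∧ r < R} with hZ
  have hZlt : ∀ r ∈ Z, r < R := fun r hr => hr.2.2
  have hZnear : ∀ ε > 0, ∃ r ∈ Z, R - ε < r := by
    intro ε hε
    obtain ⟨r, h1, h2⟩ := hSnear ε hε
    exact ⟨r, h1, h2⟩
  have hZinf : Z.Infinite := S3.infinite_of_approach hR0 hZlt hZnear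
  -- the H polynomials vanish identically
  have hHzero : ∀ (k : Fin (n+1)) (t : ℝ), Polynomial.aeval t (S3.Hpoly m n S k) = 0 := by
    intro k t
    set Hr : Polynomial ℝ := (S3.Hpoly m n S k).map (Int.castRingHom ℝ) with hHr
    have hvan : Z ⊆ {x | Hr.IsRoot x} := by
      intro r hr
      have h := (S3.works_vals hr.1).2.1 k
      show Hr.eval r = 0
      rw [hHr, ← S3.aeval_eq_eval_map]
      exact h
    have hzero : Hr = 0 := Polynomial.eq_zero_of_infinite_isRoot Hr (hZinf.mono hvan)
    rw [S3.aeval_eq_eval_map, ← hHr, hzero]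
    simp
  -- W: product of all relevant nonzero polynomials
  have hZne : Z.Nonempty := by
    obtain ⟨r, hr, _⟩ := hZnear R hR0
    exact ⟨r, hr⟩
  obtain ⟨t00, ht00⟩ := hZne
  have hDne : S3.Dpoly m n S ≠ 0 := by
    intro h
    have := (S3.works_vals ht00.1).1
    rw [h] at this
    simp at this
  set J : Finset {x // x ∈ S} := Finset.univ.filter (fun j => S3.Gvec m n S j ≠ 0) with hJ
  set W : Polynomial ℤ := S3.Dpoly m n S * ∏ j ∈ J, S3.Gvec m n S j with hW
  have hWne : W ≠ 0 :=
    mul_ne_zero hDne (Finset.prod_ne_zero_iff.mpr (fun j hj => (Finset.mem_filter.mp hj).2))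
  set Wr := W.map (Int.castRingHom ℝ) with hWr
  have hWrne : Wr ≠ 0 := by
    intro h
    apply hWne
    apply Polynomial.map_injective (Int.castRingHom ℝ) Int.cast_injective
    rw [Polynomial.map_zero]
    exact h
  have hWR : Wr.eval R ≠ 0 := by
    rw [hWr, ← S3.aeval_eq_eval_map]
    exact hcon W hWne
  obtain ⟨δ, hδ0, hδ⟩ := S3.rootfree Wr hWrne R hWR
  -- evaluation nonvanishing inside the interval
  have hDt : ∀ t, |t - R| < δ → Polynomial.aeval t (S3.Dpoly m n S) ≠ 0 := by
    intro t ht h0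
    apply hδ t ht
    rw [hWr, ← S3.aeval_eq_eval_map, hW, _root_.map_mul, h0, zero_mul]
  have hGt : ∀ j ∈ J, ∀ t, |t - R| < δ → Polynomial.aeval t (S3.Gvec m n S j) ≠ 0 := by
    intro j hj t ht h0
    apply hδ t ht
    rw [hWr, ← S3.aeval_eq_eval_map, hW, _root_.map_mul, map_prod]
    rw [Finset.prod_eq_zero hj h0, mul_zero]
  -- pick t0 ∈ Z very close to R, and t1 > R
  obtain ⟨t0, ht0Z, ht0near⟩ := hZnear (min δ R) (lt_min hδ0 hR0)
  have ht0R : t0 < R := ht0Z.2.2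
  have ht0in : |t0 - R| < δ := by
    rw [abs_sub_lt_iff]
    constructor
    · linarith
    · have : R - δ ≤ R - min δ R := by
        have := min_le_left δ R
        linarith
      linarith
  set t1 : ℝ := R + δ/2 with ht1def
  have ht1R : R < t1 := by
    rw [ht1def]; linarith
  have ht1in : |t1 - R| < δ := by
    rw [abs_sub_lt_iff]
    constructor <;> [skip; skip] <;> rw [ht1def] <;> linarith
  have hIcc : ∀ x ∈ Set.Icc t0 t1, |x - R| < δ := by
    intro x hx
    rw [abs_sub_lt_iff]
    constructor
    · have := hx.2; rw [ht1def] at this; linarith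
    · have h1 := hx.1
      have h2 : R - δ < t0 := by
        have := min_le_left δ R
        linarith
      linarith
  -- positivity of the numerators at t1
  have hQpos : ∀ j ∈ J, 0 < Polynomial.aeval t1 (S3.Gvec m n S j * S3.Dpoly m n S) := by
    intro j hj
    have key : ∀ x ∈ Set.Icc t0 t1,
        ((S3.Gvec m n S j * S3.Dpoly m n S).map (Int.castRingHom ℝ)).eval x ≠ 0 := by
      intro x hx
      rw [← S3.aeval_eq_eval_map, _root_.map_mul]
      exact mul_ne_zero (hGt j hj x (hIcc x hx)) (hDt x (hIcc x hx))
    have ht0pos : 0 < ((S3.Gvec m n S j * S3.Dpoly m n S).map (Int.castRingHom ℝ)).eval t0 := by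
      have hge := (S3.works_vals ht0Z.1).2.2 j
      have hne := key t0 ⟨le_refl _, by linarith⟩
      rw [← S3.aeval_eq_eval_map] at hne ⊢
      exact lt_of_le_of_ne hge (Ne.symm hne)
    have := S3.sign_const (by linarith : t0 ≤ t1) key ht0pos
    rwa [← S3.aeval_eq_eval_map] at this
  -- construct a feasible point at t1 > R
  have hfeas : S3.Feas m n t1 := by
    set bco : Fin (m+1) → ℝ := fun j => if h : j ∈ S then
        (Polynomial.aeval t1 (S3.Gvec m n S ⟨j, h⟩) / Polynomial.aeval t1 (S3.Dpoly m n S) : ℝ)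
      else (0:ℝ) with hbco
    have hbS : ∀ (j : Fin (m+1)) (h : j ∈ S), bco j
        = Polynomial.aeval t1 (S3.Gvec m n S ⟨j, h⟩) / Polynomial.aeval t1 (S3.Dpoly m n S) := by
      intro j h
      simp only [hbco, dif_pos h]
    have hbnS : ∀ j ∉ S, bco j = 0 := by
      intro j h
      simp only [hbco, dif_neg h]
    refine ⟨bco, ?_, ?_⟩
    · intro j
      by_cases h : j ∈ S
      · rw [hbS j h]
        by_cases hj : S3.Gvec m n S ⟨j, h⟩ = 0
        · rw [hj]
          simp
        · have hjJ : (⟨j, h⟩ : {x // x ∈ S}) ∈ J :=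
            Finset.mem_filter.mpr ⟨Finset.mem_univ _, hj⟩
          have hpos := hQpos _ hjJ
          rw [_root_.map_mul] at hpos
          have hDne1 := hDt t1 ht1in
          have heq : Polynomial.aeval t1 (S3.Gvec m n S ⟨j, h⟩) / Polynomial.aeval t1 (S3.Dpoly m n S)
              = (Polynomial.aeval t1 (S3.Gvec m n S ⟨j, h⟩) * Polynomial.aeval t1 (S3.Dpoly m n S))
                / (Polynomial.aeval t1 (S3.Dpoly m n S))^2 := by
            field_simp
          rw [heq]
          have hsq : 0 < (Polynomial.aeval t1 (S3.Dpoly m n S))^2 :=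
            lt_of_le_of_ne (sq_nonneg _) (Ne.symm (pow_ne_zero 2 hDne1))
          exact (div_pos hpos hsq).le
      · rw [hbnS j h]
    · intro k
      have hDne1 := hDt t1 ht1in
      rw [← Finset.sum_subset S.subset_univ
        (fun x _ hx => by rw [hbnS x hx, zero_mul] :
          ∀ x ∈ Finset.univ, x ∉ S →
            bco x * Polynomial.aeval t1 (S3.Apoly (k:ℕ) (x:ℕ)) = 0)]
      rw [← Finset.sum_coe_sort S (fun x => bco x * Polynomial.aeval t1 (S3.Apoly (k:ℕ) (x:ℕ)))]
      have hsimp : ∀ j : {x // x ∈ S},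
          bco (j : Fin (m+1)) * Polynomial.aeval t1 (S3.Apoly (k:ℕ) ((j : Fin (m+1)):ℕ))
          = (Polynomial.aeval t1 (S3.Gvec m n S j)
              * Polynomial.aeval t1 (S3.Apoly (k:ℕ) ((j : Fin (m+1)):ℕ)))
            / Polynomial.aeval t1 (S3.Dpoly m n S) := by
        intro j
        rw [hbS (j : Fin (m+1)) j.2]
        rw [div_mul_eq_mul_div]
      rw [Finset.sum_congr rfl (fun j _ => hsimp j)]
      rw [← Finset.sum_div]
      have hHt := hHzero k t1
      rw [S3.Hpoly, map_sub, map_sum, sub_eq_zero] at hHt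
      have hfin : ∑ j : {x // x ∈ S},
          Polynomial.aeval t1 (S3.Gvec m n S j)
            * Polynomial.aeval t1 (S3.Apoly (k:ℕ) ((j : Fin (m+1)):ℕ))
          = Polynomial.aeval t1 (S3.Dpoly m n S) := by
        rw [← hHt]
        refine Finset.sum_congr rfl fun j _ => ?_
        rw [_root_.map_mul]
        exact mul_comm _ _
      rw [hfin, div_self hDne1]
  exact S3.T5 hn hmn (hR ▸ ht1R) hfeas
end
end

section
/- Let m ≥ n ≥ 1 be integers, R > 0 a real number, α_1, …, α_s nonnegative real numbers, and 0 ≤ m_1 < m_2 < … < m_s ≤ m pairwise distinct integers. Then the following are equivalent: (i) H_n(x;R) = Σ_{i=1}^{s} α_i (x − m_i)^n for all real x; (ii) Σ_{i=1}^{s} α_i m_i^ℓ = B_ℓ(R) for every ℓ = 0, 1, …, n; (iii) ∫ P dμ_R = Σ_{i=1}^{s} α_i P(m_i) for every real polynomial P of degree at most n; (iv) the polynomial Φ(x) := Σ_{i=1}^{s} α_i (1 + x/R)^{m_i} is absolutely monotonic on [−R,0] and satisfies Φ^{(k)}(0) = 1 for k = 0, 1, …, n. -/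
open Polynomial

noncomputable section

/-- The Touchard polynomials `B_n`. -/
def touchard : ℕ → Polynomial ℝ
  | 0 => 1
  | (n + 1) => Polynomial.X * (touchard n + Polynomial.derivative (touchard n))

/-- The polynomial `H_n(·; R) = Σ_{k=0}^{n} (−1)^{n−k} binom(n,k) B_{n−k}(R) x^k`. -/
def Hpoly (n : ℕ) (R : ℝ) : Polynomial ℝ :=
  ∑ k ∈ Finset.range (n + 1),
    Polynomial.C ((-1 : ℝ) ^ (n - k) * (n.choose k : ℝ) * (touchard (n - k)).eval R) *
      Polynomial.X ^ k

/-- Integral of a polynomial against the Poisson–Charlier measure `μ_R`. -/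
def pcInt (R : ℝ) (f : Polynomial ℝ) : ℝ :=
  ∑' j : ℕ, Real.exp (-R) * f.eval (j : ℝ) * R ^ j / (Nat.factorial j : ℝ)

namespace S6

lemma exp_tsum (R : ℝ) : ∑' j : ℕ, R ^ j / (Nat.factorial j : ℝ) = Real.exp R := by
  rw [Real.exp_eq_exp_ℝ, NormedSpace.exp_eq_tsum_div]

def mom (R : ℝ) (k : ℕ) : ℝ :=
  ∑' j : ℕ, Real.exp (-R) * (j : ℝ) ^ k * R ^ j / (Nat.factorial j : ℝ)

lemma summable_mom (R : ℝ) (hR : 0 ≤ R) (k : ℕ) :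
    Summable (fun j : ℕ => Real.exp (-R) * (j : ℝ) ^ k * R ^ j / (Nat.factorial j : ℝ)) := by
  refine Summable.of_nonneg_of_le (fun j => by positivity) (fun j => ?_)
    (((Real.summable_pow_div_factorial (Real.exp 1 * R))).mul_left
      (Real.exp (-R) * (Nat.factorial k : ℝ)))
  · 
    have h1 : (j : ℝ) ^ k ≤ (Nat.factorial k : ℝ) * Real.exp 1 ^ j := by
      have h := Real.pow_div_factorial_le_exp (j : ℝ) (Nat.cast_nonneg j) k
      rw [div_le_iff₀ (by positivity)] at h
      calc (j : ℝ) ^ k ≤ Real.exp j * (Nat.factorial k : ℝ) := h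
        _ = (Nat.factorial k : ℝ) * Real.exp 1 ^ j := by
            rw [← Real.exp_nat_mul, mul_one, mul_comm]
    have hrw : Real.exp (-R) * (Nat.factorial k : ℝ) * ((Real.exp 1 * R) ^ j / (Nat.factorial j : ℝ))
        = Real.exp (-R) * ((Nat.factorial k : ℝ) * Real.exp 1 ^ j) * R ^ j / (Nat.factorial j : ℝ) := by
      rw [mul_pow]; ring
    rw [hrw]
    gcongr

lemma pcInt_expand (R : ℝ) (hR : 0 < R) (f : Polynomial ℝ) {N : ℕ} (hN : f.natDegree < N) :
    pcInt R f = ∑ k ∈ Finset.range N, f.coeff k * mom R k := by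
  have h1 : ∀ j : ℕ, Real.exp (-R) * f.eval (j : ℝ) * R ^ j / (Nat.factorial j : ℝ)
      = ∑ k ∈ Finset.range N,
          f.coeff k * (Real.exp (-R) * (j : ℝ) ^ k * R ^ j / (Nat.factorial j : ℝ)) := by
    intro j
    rw [Polynomial.eval_eq_sum_range' hN, Finset.mul_sum, Finset.sum_mul, Finset.sum_div]
    exact Finset.sum_congr rfl fun k _ => by ring
  rw [pcInt, tsum_congr h1,
    Summable.tsum_finsetSum (fun k _ => (summable_mom R hR.le k).mul_left (f.coeff k))]
  exact Finset.sum_congr rfl fun k _ => tsum_mul_left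

lemma pcInt_monomial (R : ℝ) (k : ℕ) : pcInt R (X ^ k : Polynomial ℝ) = mom R k := by
  simp [pcInt, mom]

lemma pcInt_desc (R : ℝ) (hR : 0 < R) (k : ℕ) :
    pcInt R (descPochhammer ℝ k) = R ^ k := by
  have hterm : ∀ j : ℕ,
      Real.exp (-R) * (descPochhammer ℝ k).eval ((j : ℕ) : ℝ) * R ^ j / (Nat.factorial j : ℝ)
      = Real.exp (-R) * ((j.descFactorial k : ℝ)) * R ^ j / (Nat.factorial j : ℝ) := by
    intro j; rw [descPochhammer_eval_eq_descFactorial]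
  rw [pcInt, tsum_congr hterm]
  set a : ℕ → ℝ := fun j =>
    Real.exp (-R) * (j.descFactorial k : ℝ) * R ^ j / (Nat.factorial j : ℝ) with ha
  have hsum : Summable a := by
    apply Summable.of_nonneg_of_le (fun j => by positivity) _ (summable_mom R hR.le k)
    intro j
    have hle : (j.descFactorial k : ℝ) ≤ (j : ℝ) ^ k := by
      exact_mod_cast Nat.descFactorial_le_pow j k
    simp only [ha]
    gcongr
  have hshift := Summable.sum_add_tsum_nat_add (f := a) k hsum
  have hzero : ∑ i ∈ Finset.range k, a i = 0 := by
    apply Finset.sum_eq_zero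
    intro i hi
    have h0 : i.descFactorial k = 0 :=
      Nat.descFactorial_eq_zero_iff_lt.mpr (Finset.mem_range.mp hi)
    simp [ha, h0]
  have hterm2 : ∀ i : ℕ, a (i + k) = Real.exp (-R) * R ^ k * (R ^ i / (Nat.factorial i : ℝ)) := by
    intro i
    have hdf : (Nat.factorial i : ℝ) * ((i + k).descFactorial k : ℝ)
        = (Nat.factorial (i + k) : ℝ) := by
      have := Nat.factorial_mul_descFactorial (Nat.le_add_left k i)
      rw [Nat.add_sub_cancel] at this
      exact_mod_cast this
    have hi : (Nat.factorial i : ℝ) ≠ 0 := Nat.cast_ne_zero.mpr (Nat.factorial_ne_zero i)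
    have hik : (Nat.factorial (i + k) : ℝ) ≠ 0 := Nat.cast_ne_zero.mpr (Nat.factorial_ne_zero _)
    rw [ha]
    field_simp
    rw [pow_add]
    linear_combination (R ^ i * R ^ k) * hdf
  rw [← hshift, hzero, zero_add, tsum_congr hterm2, tsum_mul_left, exp_tsum]
  have hone : Real.exp (-R) * Real.exp R = 1 := by rw [← Real.exp_add]; simp
  linear_combination R ^ k * hone

lemma touchard_binomial (l : ℕ) :
    touchard l + derivative (touchard l)
      = ∑ k ∈ Finset.range (l + 1), C ((l.choose k : ℝ)) * touchard k := by
  induction l with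
  | zero => simp [touchard]
  | succ l ih =>
    have ihd : derivative (touchard l + derivative (touchard l))
        = ∑ k ∈ Finset.range (l + 1), C ((l.choose k : ℝ)) * derivative (touchard k) := by
      rw [ih, derivative_sum]
      exact Finset.sum_congr rfl fun k _ => derivative_C_mul _ _
    have hstep : ∀ k, C (((l + 1).choose (k + 1) : ℝ)) * touchard (k + 1)
        = C ((l.choose k : ℝ)) * touchard (k + 1)
          + C ((l.choose (k + 1) : ℝ)) * touchard (k + 1) := by
      intro k
      rw [Nat.choose_succ_succ]
      push_cast
      rw [C_add, add_mul]
    have h1 : ∑ k ∈ Finset.range (l + 1), C ((l.choose (k + 1) : ℝ)) * touchard (k + 1)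
          + C (((l + 1).choose 0 : ℝ)) * touchard 0
        = touchard l + derivative (touchard l) := by
      have e : ∑ k ∈ Finset.range (l + 2), C ((l.choose k : ℝ)) * touchard k
          = ∑ k ∈ Finset.range (l + 1), C ((l.choose k : ℝ)) * touchard k := by
        rw [Finset.sum_range_succ, Nat.choose_succ_self]
        simp
      rw [Finset.sum_range_succ'] at e
      simp only [Nat.choose_zero_right, Nat.cast_one] at e ⊢
      rw [e, ← ih]
    have h2 : ∑ k ∈ Finset.range (l + 1), C ((l.choose k : ℝ)) * touchard (k + 1)
        = X * ((touchard l + derivative (touchard l))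
            + (derivative (touchard l) + derivative (derivative (touchard l)))) := by
      have e1 : ∀ k, C ((l.choose k : ℝ)) * touchard (k + 1)
          = X * (C ((l.choose k : ℝ)) * touchard k)
            + X * (C ((l.choose k : ℝ)) * derivative (touchard k)) := by
        intro k
        rw [show touchard (k + 1) = X * (touchard k + derivative (touchard k)) from rfl]
        ring
      rw [Finset.sum_congr rfl fun k _ => e1 k, Finset.sum_add_distrib,
        ← Finset.mul_sum, ← Finset.mul_sum, ← ih, ← ihd, derivative_add]
      ring
    have hder : derivative (touchard (l + 1))
        = (touchard l + derivative (touchard l))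
          + X * (derivative (touchard l) + derivative (derivative (touchard l))) := by
      rw [show touchard (l + 1) = X * (touchard l + derivative (touchard l)) from rfl,
        derivative_mul, derivative_X, derivative_add]
      ring
    rw [Finset.sum_range_succ' _ (l + 1), Finset.sum_congr rfl fun k _ => hstep k,
      Finset.sum_add_distrib, hder,
      show touchard (l + 1) = X * (touchard l + derivative (touchard l)) from rfl]
    linear_combination (-1 : Polynomial ℝ) * h1 - h2

lemma mom_shift (R : ℝ) (hR : 0 < R) (l : ℕ) :
    mom R (l + 1) = R * ∑ k ∈ Finset.range (l + 1), (l.choose k : ℝ) * mom R k := by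
  have hs := summable_mom R hR.le (l + 1)
  rw [mom, Summable.tsum_eq_zero_add hs]
  have h0 : Real.exp (-R) * ((0 : ℕ) : ℝ) ^ (l + 1) * R ^ (0 : ℕ) / (Nat.factorial 0 : ℝ) = 0 := by
    norm_num
  rw [h0, zero_add]
  have hpt : ∀ j : ℕ,
      Real.exp (-R) * ((j + 1 : ℕ) : ℝ) ^ (l + 1) * R ^ (j + 1) / (Nat.factorial (j + 1) : ℝ)
      = ∑ k ∈ Finset.range (l + 1),
          (l.choose k : ℝ) * (R * (Real.exp (-R) * (j : ℝ) ^ k * R ^ j / (Nat.factorial j : ℝ))) := by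
    intro j
    have hfj : (Nat.factorial j : ℝ) ≠ 0 := Nat.cast_ne_zero.mpr (Nat.factorial_ne_zero j)
    have hj1 : ((j : ℝ) + 1) ≠ 0 := by positivity
    have step1 : Real.exp (-R) * ((j + 1 : ℕ) : ℝ) ^ (l + 1) * R ^ (j + 1) / (Nat.factorial (j + 1) : ℝ)
        = R * (Real.exp (-R) * ((j : ℝ) + 1) ^ l * R ^ j / (Nat.factorial j : ℝ)) := by
      rw [Nat.factorial_succ]
      push_cast
      rw [pow_succ ((j : ℝ) + 1) l, pow_succ R j]
      field_simp
    have hexp : ((j : ℝ) + 1) ^ l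
        = ∑ k ∈ Finset.range (l + 1), (j : ℝ) ^ k * (l.choose k : ℝ) := by
      rw [add_pow]
      exact Finset.sum_congr rfl fun k _ => by rw [one_pow, mul_one]
    rw [step1, hexp, Finset.mul_sum, Finset.sum_mul, Finset.sum_div, Finset.mul_sum]
    exact Finset.sum_congr rfl fun k _ => by ring
  rw [tsum_congr hpt,
    Summable.tsum_finsetSum (fun k _ => (((summable_mom R hR.le k).mul_left R).mul_left ((l.choose k : ℝ))))]
  rw [Finset.mul_sum]
  refine Finset.sum_congr rfl fun k _ => ?_
  rw [tsum_mul_left, tsum_mul_left]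
  show (l.choose k : ℝ) * (R * mom R k) = R * ((l.choose k : ℝ) * mom R k)
  ring

lemma mom_eq_touchard (R : ℝ) (hR : 0 < R) : ∀ l : ℕ, mom R l = (touchard l).eval R := by
  intro l
  induction l using Nat.strong_induction_on with
  | _ l ih =>
    cases l with
    | zero =>
      have h : ∀ j : ℕ, Real.exp (-R) * (j : ℝ) ^ 0 * R ^ j / (Nat.factorial j : ℝ)
          = Real.exp (-R) * (R ^ j / (Nat.factorial j : ℝ)) := by
        intro j; rw [pow_zero]; ring
      rw [mom, tsum_congr h, tsum_mul_left, exp_tsum, ← Real.exp_add]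
      simp [touchard]
    | succ l =>
      rw [mom_shift R hR l,
        Finset.sum_congr rfl fun k hk => by
          rw [ih k (Nat.lt_succ_of_le (Nat.le_of_lt_succ (Finset.mem_range.mp hk)))]]
      have he := congrArg (Polynomial.eval R) (touchard_binomial l)
      rw [eval_finset_sum] at he
      simp only [eval_mul, eval_C] at he
      rw [show touchard (l + 1) = X * (touchard l + derivative (touchard l)) from rfl,
        eval_mul, eval_X, he]

lemma iter_deriv_sum {ι : Type*} (s : Finset ι) (f : ι → Polynomial ℝ) (k : ℕ) :
    derivative^[k] (∑ i ∈ s, f i) = ∑ i ∈ s, derivative^[k] (f i) := by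
  induction k with
  | zero => simp
  | succ k ihk =>
    rw [Function.iterate_succ_apply', ihk, derivative_sum]
    exact Finset.sum_congr rfl fun i _ => (Function.iterate_succ_apply' _ _ _).symm

lemma iter_deriv_C_mul (a : ℝ) (p : Polynomial ℝ) (k : ℕ) :
    derivative^[k] (C a * p) = C a * derivative^[k] p := by
  induction k with
  | zero => simp
  | succ k ihk =>
    rw [Function.iterate_succ_apply', ihk, derivative_C_mul,
      show (⇑derivative)^[k + 1] p = derivative ((⇑derivative)^[k] p) from
        Function.iterate_succ_apply' _ _ _]

lemma iter_deriv_base (R : ℝ) (t k : ℕ) :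
    derivative^[k] (((1 : Polynomial ℝ) + C R⁻¹ * X) ^ t)
      = C ((t.descFactorial k : ℝ) * (R⁻¹) ^ k) * ((1 : Polynomial ℝ) + C R⁻¹ * X) ^ (t - k) := by
  induction k with
  | zero => simp
  | succ k ihk =>
    rw [Function.iterate_succ_apply', ihk, derivative_C_mul, derivative_pow]
    have hd : derivative ((1 : Polynomial ℝ) + C R⁻¹ * X) = C R⁻¹ := by
      simp
    rw [hd, Nat.descFactorial_succ, Nat.cast_mul,
      show t - k - 1 = t - (k + 1) from by omega, pow_succ]
    simp only [C_mul]
    ring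

lemma iter_deriv_phi_eval {s : ℕ} (R : ℝ) (α : Fin s → ℝ) (ms : Fin s → ℕ) (k : ℕ) (x : ℝ) :
    (derivative^[k] (∑ i : Fin s, C (α i) *
        ((1 : Polynomial ℝ) + C R⁻¹ * X) ^ (ms i))).eval x
      = ∑ i : Fin s, α i * (((ms i).descFactorial k : ℝ) * (R⁻¹) ^ k
          * (1 + R⁻¹ * x) ^ (ms i - k)) := by
  rw [iter_deriv_sum, eval_finset_sum]
  refine Finset.sum_congr rfl fun i _ => ?_
  rw [iter_deriv_C_mul, iter_deriv_base]
  simp only [eval_mul, eval_C, eval_pow, eval_add, eval_one, eval_X]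
  try ring

lemma Hpoly_coeff (n : ℕ) (R : ℝ) (t : ℕ) (ht : t ≤ n) :
    (Hpoly n R).coeff t
      = (-1 : ℝ) ^ (n - t) * (n.choose t : ℝ) * (touchard (n - t)).eval R := by
  rw [Hpoly, finset_sum_coeff]
  simp only [coeff_C_mul, coeff_X_pow]
  rw [Finset.sum_eq_single t]
  · simp
  · intro b _ hbt
    simp [hbt, Ne.symm hbt]
  · intro h
    exact absurd (Finset.mem_range.mpr (by omega)) h

end S6

open S6 in
theorem statement6 (m n s : ℕ) (hn : 1 ≤ n) (hmn : n ≤ m) (hs : 1 ≤ s)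
    (R : ℝ) (hR : 0 < R)
    (α : Fin s → ℝ) (hα : ∀ i, 0 ≤ α i)
    (ms : Fin s → ℕ) (hms : StrictMono ms) (hmsm : ∀ i, ms i ≤ m) :
    List.TFAE
      [ (∀ x : ℝ, (Hpoly n R).eval x = ∑ i : Fin s, α i * (x - (ms i : ℝ)) ^ n),
        (∀ ℓ ≤ n, ∑ i : Fin s, α i * ((ms i : ℝ)) ^ ℓ = (touchard ℓ).eval R),
        (∀ P : Polynomial ℝ, P.natDegree ≤ n →
          pcInt R P = ∑ i : Fin s, α i * P.eval ((ms i : ℝ))),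
        (AbsolutelyMonotonicOn
            (∑ i : Fin s, Polynomial.C (α i) *
              ((1 : Polynomial ℝ) + Polynomial.C R⁻¹ * Polynomial.X) ^ (ms i)) (-R) 0 ∧
          ∀ k ≤ n,
            (Polynomial.derivative^[k]
              (∑ i : Fin s, Polynomial.C (α i) *
                ((1 : Polynomial ℝ) + Polynomial.C R⁻¹ * Polynomial.X) ^ (ms i))).eval 0 = 1) ]
    := by
  tfae_have 2 → 3 := by
    intro h2 P hP
    rw [pcInt_expand R hR P (show P.natDegree < n + 1 by omega)]
    have hev : ∀ i : Fin s, P.eval ((ms i : ℝ))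
        = ∑ k ∈ Finset.range (n + 1), P.coeff k * (ms i : ℝ) ^ k :=
      fun i => Polynomial.eval_eq_sum_range' (by omega) _
    calc ∑ k ∈ Finset.range (n + 1), P.coeff k * mom R k
        = ∑ k ∈ Finset.range (n + 1), P.coeff k * ∑ i : Fin s, α i * (ms i : ℝ) ^ k := by
          refine Finset.sum_congr rfl fun k hk => ?_
          rw [mom_eq_touchard R hR k,
            ← h2 k (Nat.lt_succ_iff.mp (Finset.mem_range.mp hk))]
      _ = ∑ i : Fin s, α i * P.eval ((ms i : ℝ)) := by
          simp_rw [Finset.mul_sum]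
          rw [Finset.sum_comm]
          refine Finset.sum_congr rfl fun i _ => ?_
          rw [hev i, Finset.mul_sum]
          exact Finset.sum_congr rfl fun k _ => by ring
  tfae_have 3 → 2 := by
    intro h3 l hl
    have h := h3 (X ^ l) (by rw [natDegree_X_pow]; exact hl)
    rw [pcInt_monomial, mom_eq_touchard R hR] at h
    simpa using h.symm
  tfae_have 3 → 4 := by
    intro h3
    refine ⟨?_, ?_⟩
    · intro k x hx
      rw [iter_deriv_phi_eval]
      refine Finset.sum_nonneg fun i _ => ?_
      have h1 : (0 : ℝ) ≤ 1 + R⁻¹ * x := by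
        obtain ⟨hx1, hx2⟩ := hx
        have h2 : R⁻¹ * (-R) ≤ R⁻¹ * x :=
          mul_le_mul_of_nonneg_left hx1 (by positivity)
        rw [show R⁻¹ * (-R) = -1 from by field_simp] at h2
        linarith
      have h2 := hα i
      positivity
    · intro k hk
      have hdeg : (descPochhammer ℝ k).natDegree = k := descPochhammer_natDegree ℝ k
      have hd := h3 (descPochhammer ℝ k) (by rw [hdeg]; exact hk)
      rw [pcInt_desc R hR] at hd
      have hd2 : R ^ k = ∑ i : Fin s, α i * ((ms i).descFactorial k : ℝ) := by
        rw [hd]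
        exact Finset.sum_congr rfl fun i _ => by
          rw [descPochhammer_eval_eq_descFactorial]
      rw [iter_deriv_phi_eval]
      have hcol : ∑ i : Fin s, α i * (((ms i).descFactorial k : ℝ) * R⁻¹ ^ k
            * (1 + R⁻¹ * 0) ^ (ms i - k))
          = (∑ i : Fin s, α i * ((ms i).descFactorial k : ℝ)) * R⁻¹ ^ k := by
        rw [Finset.sum_mul]
        exact Finset.sum_congr rfl fun i _ => by
          rw [mul_zero, add_zero, one_pow]; ring
      rw [hcol, ← hd2, ← mul_pow, mul_inv_cancel₀ hR.ne', one_pow]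
  tfae_have 4 → 2 := by
    rintro ⟨-, h4⟩
    have hD : ∀ k, k ≤ n → ∑ i : Fin s, α i * ((ms i).descFactorial k : ℝ) = R ^ k := by
      intro k hk
      have h := h4 k hk
      rw [iter_deriv_phi_eval] at h
      have h2 : (∑ i : Fin s, α i * ((ms i).descFactorial k : ℝ)) * R⁻¹ ^ k = 1 := by
        rw [Finset.sum_mul, ← h]
        exact Finset.sum_congr rfl fun i _ => by
          rw [mul_zero, add_zero, one_pow]; ring
      calc ∑ i : Fin s, α i * ((ms i).descFactorial k : ℝ)
          = (∑ i : Fin s, α i * ((ms i).descFactorial k : ℝ)) * R⁻¹ ^ k * R ^ k := by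
            rw [mul_assoc, ← mul_pow, inv_mul_cancel₀ hR.ne', one_pow, mul_one]
        _ = R ^ k := by rw [h2, one_mul]
    intro l
    induction l using Nat.strong_induction_on with
    | _ l ih =>
      intro hl
      have hdeg : (descPochhammer ℝ l).natDegree = l := descPochhammer_natDegree ℝ l
      have e1 : ∑ k ∈ Finset.range (l + 1), (descPochhammer ℝ l).coeff k * mom R k
          = R ^ l := by
        rw [← pcInt_expand R hR _ (show (descPochhammer ℝ l).natDegree < l + 1 by omega),
          pcInt_desc R hR]
      have e2 : ∑ k ∈ Finset.range (l + 1),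
          (descPochhammer ℝ l).coeff k * (∑ i : Fin s, α i * (ms i : ℝ) ^ k) = R ^ l := by
        rw [← hD l hl]
        simp_rw [Finset.mul_sum]
        rw [Finset.sum_comm]
        refine Finset.sum_congr rfl fun i _ => ?_
        have hev : ((ms i).descFactorial l : ℝ)
            = ∑ k ∈ Finset.range (l + 1), (descPochhammer ℝ l).coeff k * (ms i : ℝ) ^ k := by
          rw [← descPochhammer_eval_eq_descFactorial ℝ (ms i) l]
          exact Polynomial.eval_eq_sum_range' (by omega) _
        rw [hev, Finset.mul_sum]
        exact Finset.sum_congr rfl fun k _ => by ring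
      have e3 := e2.trans e1.symm
      rw [Finset.sum_range_succ, Finset.sum_range_succ] at e3
      have e4 : ∑ k ∈ Finset.range l,
            (descPochhammer ℝ l).coeff k * (∑ i : Fin s, α i * (ms i : ℝ) ^ k)
          = ∑ k ∈ Finset.range l, (descPochhammer ℝ l).coeff k * mom R k := by
        refine Finset.sum_congr rfl fun k hk => ?_
        rw [ih k (Finset.mem_range.mp hk)
            (le_trans (le_of_lt (Finset.mem_range.mp hk)) hl),
          mom_eq_touchard R hR]
      have hml : (descPochhammer ℝ l).coeff l = 1 := by
        have hm := monic_descPochhammer ℝ l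
        rwa [Polynomial.Monic, Polynomial.leadingCoeff, hdeg] at hm
      rw [e4, hml, one_mul, one_mul] at e3
      have e5 := add_left_cancel e3
      rw [e5]
      exact mom_eq_touchard R hR l
  tfae_have 2 → 1 := by
    intro h2 x
    have hH : (Hpoly n R).eval x = ∑ k ∈ Finset.range (n + 1),
        (-1 : ℝ) ^ (n - k) * (n.choose k : ℝ) * (touchard (n - k)).eval R * x ^ k := by
      rw [Hpoly, eval_finset_sum]
      exact Finset.sum_congr rfl fun k _ => by rw [eval_mul, eval_C, eval_pow, eval_X]
    rw [hH]
    have hsub : ∀ i : Fin s, (x - (ms i : ℝ)) ^ n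
        = ∑ k ∈ Finset.range (n + 1),
            x ^ k * (-(ms i : ℝ)) ^ (n - k) * (n.choose k : ℝ) := by
      intro i
      rw [sub_eq_add_neg, add_pow]
    have hR1 : ∑ i : Fin s, α i * (x - (ms i : ℝ)) ^ n
        = ∑ i : Fin s, ∑ k ∈ Finset.range (n + 1),
            α i * (x ^ k * (-(ms i : ℝ)) ^ (n - k) * (n.choose k : ℝ)) := by
      refine Finset.sum_congr rfl fun i _ => ?_
      rw [hsub i, Finset.mul_sum]
    rw [hR1, Finset.sum_comm]
    refine Finset.sum_congr rfl fun k hk => ?_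
    rw [← h2 (n - k) (Nat.sub_le n k), Finset.mul_sum, Finset.sum_mul]
    exact Finset.sum_congr rfl fun i _ => by rw [neg_pow]; ring
  tfae_have 1 → 2 := by
    intro h1 l hl
    have hpoly : Hpoly n R = ∑ i : Fin s, C (α i) * (X + C (-(ms i : ℝ))) ^ n := by
      apply Polynomial.funext
      intro x
      rw [h1 x, eval_finset_sum]
      refine Finset.sum_congr rfl fun i _ => ?_
      simp [eval_mul, eval_pow, sub_eq_add_neg]
    have hco := congrArg (fun p : Polynomial ℝ => p.coeff (n - l)) hpoly
    rw [Hpoly_coeff n R (n - l) (Nat.sub_le n l), finset_sum_coeff] at hco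
    simp only [coeff_C_mul, coeff_X_add_C_pow] at hco
    rw [show n - (n - l) = l from by omega] at hco
    have hcc : ((n.choose (n - l) : ℝ)) ≠ 0 :=
      Nat.cast_ne_zero.mpr (Nat.choose_pos (Nat.sub_le n l)).ne'
    have hrw : ∑ i : Fin s, α i * ((-(ms i : ℝ)) ^ l * (n.choose (n - l) : ℝ))
        = (-1 : ℝ) ^ l * (n.choose (n - l) : ℝ) * ∑ i : Fin s, α i * (ms i : ℝ) ^ l := by
      rw [Finset.mul_sum]
      exact Finset.sum_congr rfl fun i _ => by rw [neg_pow]; ring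
    rw [hrw] at hco
    have hne : ((-1 : ℝ) ^ l * (n.choose (n - l) : ℝ)) ≠ 0 :=
      mul_ne_zero (pow_ne_zero _ (by norm_num)) hcc
    exact (mul_left_cancel₀ hne hco).symm
  tfae_finish
end
end

section
/- Let m ≥ n ≥ 1 be integers. Then the set S := {R > 0 : there exist s ≥ 1, integers 0 ≤ m_1 < m_2 < … < m_s ≤ m and nonnegative real numbers α_1, …, α_s with H_n(x;R) = Σ_{i=1}^{s} α_i (x − m_i)^n for all real x} has a maximum, and this maximum equals the optimal threshold factor R_{m,n}. -/
open Polynomial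

noncomputable section

/-- Stirling numbers of the second kind. -/
def stir : ℕ → ℕ → ℕ
  | 0, 0 => 1
  | 0, _ + 1 => 0
  | _ + 1, 0 => 0
  | i + 1, k + 1 => (k + 1) * stir i (k + 1) + stir i k

lemma stir_of_lt : ∀ {i k : ℕ}, i < k → stir i k = 0
  | 0, _ + 1, _ => rfl
  | i + 1, k + 1, h => by
      have h1 : i < k + 1 := by omega
      have h2 : i < k := by omega
      simp [stir, stir_of_lt h1, stir_of_lt h2]

lemma stir_self : ∀ i : ℕ, stir i i = 1
  | 0 => rfl
  | i + 1 => by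
      have := stir_of_lt (show i < i + 1 by omega)
      simp [stir, this, stir_self i]

/-- The key recurrence manipulation, generically over a commutative ring. -/
lemma stir_expand {A : Type*} [CommRing A] (g : ℕ → A) (i : ℕ) :
    ∑ k ∈ Finset.range (i + 1), (stir i k : A) * (g (k + 1) + (k : A) * g k)
      = ∑ k ∈ Finset.range (i + 2), (stir (i + 1) k : A) * g k := by
  have e1 : ∑ k ∈ Finset.range (i + 2), (k : A) * (stir i k : A) * g k
      = ∑ k ∈ Finset.range (i + 1), ((k : A) + 1) * (stir i (k + 1) : A) * g (k + 1) := by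
    rw [Finset.sum_range_succ' (fun k => (k : A) * (stir i k : A) * g k) (i + 1)]
    push_cast
    simp
  have e2 : ∑ k ∈ Finset.range (i + 2), (k : A) * (stir i k : A) * g k
      = ∑ k ∈ Finset.range (i + 1), (k : A) * (stir i k : A) * g k := by
    rw [Finset.sum_range_succ, stir_of_lt (show i < i + 1 by omega)]
    simp
  have e3 : ∑ k ∈ Finset.range (i + 2), (stir (i + 1) k : A) * g k
      = ∑ k ∈ Finset.range (i + 1), (stir (i + 1) (k + 1) : A) * g (k + 1) := by
    rw [Finset.sum_range_succ' (fun k => (stir (i+1) k : A) * g k) (i + 1)]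
    simp [stir]
  rw [e3]
  have e4 : ∑ k ∈ Finset.range (i + 1), (stir (i + 1) (k + 1) : A) * g (k + 1)
      = ∑ k ∈ Finset.range (i + 1), (((k : A) + 1) * (stir i (k + 1) : A) * g (k + 1)
          + (stir i k : A) * g (k + 1)) := by
    refine Finset.sum_congr rfl fun k _ => ?_
    rw [show stir (i + 1) (k + 1) = (k + 1) * stir i (k + 1) + stir i k from rfl]
    push_cast; ring
  rw [e4, Finset.sum_add_distrib, ← e1, e2]
  have lhs : ∑ k ∈ Finset.range (i + 1), (stir i k : A) * (g (k + 1) + (k : A) * g k)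
      = ∑ k ∈ Finset.range (i + 1), ((stir i k : A) * g (k + 1) + (k : A) * (stir i k : A) * g k) :=
    Finset.sum_congr rfl fun k _ => by ring
  rw [lhs, Finset.sum_add_distrib, add_comm]

/-- `j^i = Σ_k stir i k (j)_k` over ℝ. -/
lemma pow_eq_sum_stir (j : ℕ) : ∀ i : ℕ, (j : ℝ) ^ i
    = ∑ k ∈ Finset.range (i + 1), (stir i k : ℝ) * (j.descFactorial k : ℝ)
  | 0 => by simp [stir]
  | i + 1 => by
      have hdesc : ∀ k : ℕ, (j : ℝ) * (j.descFactorial k : ℝ)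
          = (j.descFactorial (k + 1) : ℝ) + (k : ℝ) * (j.descFactorial k : ℝ) := by
        intro k
        rcases le_or_gt k j with h | h
        · rw [Nat.descFactorial_succ]
          push_cast [h]
          ring
        · rw [Nat.descFactorial_eq_zero_iff_lt.2 h,
            Nat.descFactorial_eq_zero_iff_lt.2 (by omega)]
          simp
      have : (j : ℝ) ^ (i + 1) = (j : ℝ) * (j : ℝ) ^ i := by ring
      rw [this, pow_eq_sum_stir j i, Finset.mul_sum]
      rw [← stir_expand (fun k => (j.descFactorial k : ℝ)) i]
      refine Finset.sum_congr rfl fun k _ => ?_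
      rw [← hdesc k]; ring

/-- The Touchard polynomial as a sum of monomials with Stirling coefficients. -/
lemma touchard_eq_sum : ∀ i : ℕ, touchard i
    = ∑ k ∈ Finset.range (i + 1), Polynomial.C (stir i k : ℝ) * Polynomial.X ^ k
  | 0 => by simp [touchard, stir]
  | i + 1 => by
      rw [show touchard (i + 1) = Polynomial.X * (touchard i + Polynomial.derivative (touchard i)) from rfl]
      rw [touchard_eq_sum i]
      rw [derivative_sum]
      have hderiv : ∀ k : ℕ, Polynomial.derivative (Polynomial.C (stir i k : ℝ) * Polynomial.X ^ k)
          = Polynomial.C ((stir i k : ℝ) * k) * Polynomial.X ^ (k - 1) := by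
        intro k
        rw [derivative_C_mul, derivative_X_pow]
        simp only [map_mul, map_natCast]
        ring
      have key : ∀ k : ℕ, Polynomial.X * (Polynomial.C (stir i k : ℝ) * Polynomial.X ^ k
            + Polynomial.C ((stir i k : ℝ) * k) * Polynomial.X ^ (k - 1))
          = Polynomial.C (stir i k : ℝ) * (Polynomial.X ^ (k + 1) + Polynomial.C (k : ℝ) * Polynomial.X ^ k) := by
        intro k
        cases k with
        | zero => simp [mul_comm]
        | succ l =>
            have : l + 1 - 1 = l := rfl
            rw [this]
            simp only [map_mul, map_natCast, map_add, map_one]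
            push_cast
            ring
      calc Polynomial.X * (∑ k ∈ Finset.range (i + 1), Polynomial.C (stir i k : ℝ) * Polynomial.X ^ k
            + ∑ k ∈ Finset.range (i + 1), Polynomial.derivative (Polynomial.C (stir i k : ℝ) * Polynomial.X ^ k))
          = ∑ k ∈ Finset.range (i + 1), Polynomial.X * (Polynomial.C (stir i k : ℝ) * Polynomial.X ^ k
              + Polynomial.C ((stir i k : ℝ) * k) * Polynomial.X ^ (k - 1)) := by
            rw [← Finset.sum_add_distrib, Finset.mul_sum]
            refine Finset.sum_congr rfl fun k _ => ?_
            rw [hderiv k]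
        _ = ∑ k ∈ Finset.range (i + 1), (stir i k : ℝ[X]) * ((Polynomial.X ^ (k + 1)) + (k : ℝ[X]) * Polynomial.X ^ k) := by
            refine Finset.sum_congr rfl fun k _ => ?_
            rw [key k]
            simp only [map_natCast]
        _ = ∑ k ∈ Finset.range (i + 2), (stir (i + 1) k : ℝ[X]) * Polynomial.X ^ k :=
            stir_expand (fun k => Polynomial.X ^ k) i
        _ = ∑ k ∈ Finset.range (i + 2), Polynomial.C (stir (i + 1) k : ℝ) * Polynomial.X ^ k := by
            refine Finset.sum_congr rfl fun k _ => ?_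
            simp only [map_natCast]

lemma touchard_eval (i : ℕ) (R : ℝ) :
    (touchard i).eval R = ∑ k ∈ Finset.range (i + 1), (stir i k : ℝ) * R ^ k := by
  rw [touchard_eq_sum i, eval_finset_sum]
  simp

section Moments

variable {ι : Type} [Fintype ι] (p : ι → ℕ) (α : ι → ℝ)

lemma moments_desc_to_pow (i : ℕ) :
    ∑ j : ι, α j * (p j : ℝ) ^ i
      = ∑ k ∈ Finset.range (i + 1), (stir i k : ℝ)
          * (∑ j : ι, α j * ((p j).descFactorial k : ℝ)) := by
  have : ∀ j : ι, α j * (p j : ℝ) ^ i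
      = ∑ k ∈ Finset.range (i + 1), (stir i k : ℝ) * (α j * ((p j).descFactorial k : ℝ)) := by
    intro j
    rw [pow_eq_sum_stir (p j) i, Finset.mul_sum]
    exact Finset.sum_congr rfl fun k _ => by ring
  simp_rw [this, Finset.mul_sum]
  rw [Finset.sum_comm]

lemma desc_moments_iff (n : ℕ) (R : ℝ) :
    (∀ k ≤ n, ∑ j : ι, α j * ((p j).descFactorial k : ℝ) = R ^ k)
      ↔ (∀ i ≤ n, ∑ j : ι, α j * (p j : ℝ) ^ i = (touchard i).eval R) := by
  constructor
  · intro h i hi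
    rw [moments_desc_to_pow, touchard_eval]
    refine Finset.sum_congr rfl fun k hk => ?_
    rw [Finset.mem_range] at hk
    rw [h k (by omega)]
  · intro h k
    induction k using Nat.strong_induction_on with
    | _ k ih =>
      intro hk
      have hkey := h k hk
      rw [moments_desc_to_pow, touchard_eval] at hkey
      rw [Finset.sum_range_succ, Finset.sum_range_succ] at hkey
      have hsame : ∑ l ∈ Finset.range k, (stir k l : ℝ)
            * (∑ j : ι, α j * ((p j).descFactorial l : ℝ))
          = ∑ l ∈ Finset.range k, (stir k l : ℝ) * R ^ l := by
        refine Finset.sum_congr rfl fun l hl => ?_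
        rw [Finset.mem_range] at hl
        rw [ih l hl (by omega)]
      rw [hsame, stir_self k] at hkey
      have := add_left_cancel hkey
      simpa using this

end Moments

section Derivs

lemma iterDeriv_affine_pow (a b : ℝ) (j : ℕ) : ∀ k : ℕ,
    Polynomial.derivative^[k] ((Polynomial.C a + Polynomial.C b * Polynomial.X : ℝ[X]) ^ j)
      = Polynomial.C ((j.descFactorial k : ℝ) * b ^ k)
          * (Polynomial.C a + Polynomial.C b * Polynomial.X) ^ (j - k)
  | 0 => by simp
  | k + 1 => by
      rw [Function.iterate_succ_apply', iterDeriv_affine_pow a b j k, derivative_C_mul,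
        derivative_pow]
      have hd : Polynomial.derivative (Polynomial.C a + Polynomial.C b * Polynomial.X : ℝ[X])
          = Polynomial.C b := by
        simp
      rw [hd]
      have hsub : j - k - 1 = j - (k + 1) := by omega
      rw [hsub]
      have hdesc : (j.descFactorial (k + 1) : ℝ) = ((j - k : ℕ) : ℝ) * (j.descFactorial k : ℝ) := by
        rw [Nat.descFactorial_succ]; push_cast; ring
      rw [hdesc]
      simp only [pow_succ, Polynomial.C_mul]
      ring

lemma iterDeriv_sum_eval (c : ℕ → ℝ) (N : ℕ) (a b x : ℝ) (k : ℕ) :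
    ((Polynomial.derivative^[k]
        (∑ j ∈ Finset.range N, Polynomial.C (c j)
          * (Polynomial.C a + Polynomial.C b * Polynomial.X) ^ j)).eval x)
      = ∑ j ∈ Finset.range N,
          c j * ((j.descFactorial k : ℝ) * b ^ k * (a + b * x) ^ (j - k)) := by
  rw [Polynomial.iterate_derivative_sum]
  rw [Polynomial.eval_finset_sum]
  refine Finset.sum_congr rfl fun j _ => ?_
  rw [Polynomial.iterate_derivative_C_mul, iterDeriv_affine_pow]
  simp [mul_assoc]

end Derivs

section TaylorRep


lemma taylor_rep (φ : ℝ[X]) (r : ℝ) (N : ℕ) (h : φ.natDegree < N) :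
    φ = ∑ j ∈ Finset.range N,
        Polynomial.C (((Polynomial.taylor (-r)) φ).coeff j)
          * (Polynomial.C r + Polynomial.C 1 * Polynomial.X) ^ j := by
  have hx : (Polynomial.C r + Polynomial.C 1 * Polynomial.X : ℝ[X])
      = Polynomial.X + Polynomial.C r := by
    simp [add_comm]
  rw [hx]
  have h1 : φ = ((Polynomial.taylor (-r)) φ).comp (Polynomial.X + Polynomial.C r) := by
    rw [Polynomial.taylor_apply, Polynomial.comp_assoc]
    simp
  have h2 : (Polynomial.taylor (-r)) φ
      = ∑ j ∈ Finset.range N, Polynomial.monomial j (((Polynomial.taylor (-r)) φ).coeff j) :=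
    Polynomial.as_sum_range' _ N (by rwa [Polynomial.natDegree_taylor])
  calc φ = ((Polynomial.taylor (-r)) φ).comp (Polynomial.X + Polynomial.C r) := h1
    _ = ∑ j ∈ Finset.range N,
          (Polynomial.monomial j (((Polynomial.taylor (-r)) φ).coeff j)).comp
            (Polynomial.X + Polynomial.C r) := by
        rw [← Polynomial.sum_comp, ← h2]
    _ = ∑ j ∈ Finset.range N,
          Polynomial.C (((Polynomial.taylor (-r)) φ).coeff j)
            * (Polynomial.X + Polynomial.C r) ^ j := by
        refine Finset.sum_congr rfl fun j _ => ?_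
        rw [← Polynomial.C_mul_X_pow_eq_monomial, Polynomial.mul_comp, Polynomial.C_comp,
          Polynomial.X_pow_comp]

lemma taylor_coeff_nonneg (φ : ℝ[X]) (r : ℝ) (hr : 0 ≤ r)
    (ham : AbsolutelyMonotonicOn φ (-r) 0) (j : ℕ) :
    0 ≤ ((Polynomial.taylor (-r)) φ).coeff j := by
  rw [Polynomial.taylor_coeff]
  have hmem : -r ∈ Set.Icc (-r) 0 := ⟨le_refl _, by linarith⟩
  have hder := ham j (-r) hmem
  have hfac := congrFun (Polynomial.factorial_smul_hasseDeriv (R := ℝ) j) φ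
  have heq : (j.factorial : ℝ) * (((Polynomial.hasseDeriv j) φ).eval (-r))
      = ((Polynomial.derivative^[j]) φ).eval (-r) := by
    rw [← hfac]
    simp [Polynomial.eval_smul, nsmul_eq_mul]
  have hjpos : (0 : ℝ) < (j.factorial : ℝ) := by positivity
  nlinarith [hder, heq]

/-- From a polynomial in `PiSet` absolutely monotonic on `[-r,0]`, extract nonnegative
weights on `{0, …, m}` whose factorial moments are `r^k` for `k ≤ n`. -/
lemma am_to_desc_moments (m n : ℕ) (φ : ℝ[X]) (hφ : φ ∈ PiSet m n) (r : ℝ) (hr : 0 < r)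
    (ham : AbsolutelyMonotonicOn φ (-r) 0) :
    ∃ c : Fin (m + 1) → ℝ, (∀ j, 0 ≤ c j) ∧
      ∀ k ≤ n, ∑ j : Fin (m + 1), c j * (((j : ℕ).descFactorial k : ℝ)) = r ^ k := by
  obtain ⟨hdeg, hval⟩ := hφ
  set a : ℕ → ℝ := fun j => ((Polynomial.taylor (-r)) φ).coeff j with ha
  have hrep := taylor_rep φ r (m + 1) (by omega)
  refine ⟨fun j => a j * r ^ (j : ℕ), fun j => mul_nonneg (taylor_coeff_nonneg φ r hr.le ham j) (by positivity), ?_⟩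
  intro k hk
  have h1 : ((Polynomial.derivative^[k]) φ).eval 0 = 1 := hval k hk
  rw [hrep, iterDeriv_sum_eval] at h1
  have h2 : ∑ j ∈ Finset.range (m + 1),
      a j * ((j.descFactorial k : ℝ) * 1 ^ k * (r + 1 * 0) ^ (j - k)) = 1 := h1
  have h3 : ∑ j : Fin (m + 1), (a j * r ^ (j : ℕ)) * (((j : ℕ).descFactorial k : ℝ))
      = ∑ j ∈ Finset.range (m + 1), (a j * r ^ j) * ((j.descFactorial k : ℝ)) :=
    Fin.sum_univ_eq_sum_range (fun j => (a j * r ^ j) * ((j.descFactorial k : ℝ))) (m + 1)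
  rw [h3]
  have h4 : ∀ j, (a j * r ^ j) * ((j.descFactorial k : ℝ))
      = r ^ k * (a j * ((j.descFactorial k : ℝ) * 1 ^ k * (r + 1 * 0) ^ (j - k))) := by
    intro j
    rcases le_or_gt k j with hkj | hkj
    · have : r ^ j = r ^ k * r ^ (j - k) := by
        rw [← pow_add]
        congr 1
        omega
      rw [this]
      ring_nf
    · rw [Nat.descFactorial_eq_zero_iff_lt.2 hkj]
      simp
  calc ∑ j ∈ Finset.range (m + 1), (a j * r ^ j) * ((j.descFactorial k : ℝ))
      = ∑ j ∈ Finset.range (m + 1),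
          r ^ k * (a j * ((j.descFactorial k : ℝ) * 1 ^ k * (r + 1 * 0) ^ (j - k))) :=
        Finset.sum_congr rfl fun j _ => h4 j
    _ = r ^ k * ∑ j ∈ Finset.range (m + 1),
          a j * ((j.descFactorial k : ℝ) * 1 ^ k * (r + 1 * 0) ^ (j - k)) := by
        rw [Finset.mul_sum]
    _ = r ^ k := by rw [h2, mul_one]

end TaylorRep

section Construction


/-- From nonnegative weights with factorial moments `r^k`, build a polynomial in `PiSet`
that is absolutely monotonic on `[-r, 0]`. -/
lemma desc_moments_to_am (m n : ℕ) (r : ℝ) (hr : 0 < r) (c : Fin (m + 1) → ℝ)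
    (hc : ∀ j, 0 ≤ c j)
    (hmom : ∀ k ≤ n, ∑ j : Fin (m + 1), c j * (((j : ℕ).descFactorial k : ℝ)) = r ^ k) :
    ∃ φ ∈ PiSet m n, AbsolutelyMonotonicOn φ (-r) 0 := by
  set cc : ℕ → ℝ := fun j => if h : j < m + 1 then c ⟨j, h⟩ else 0 with hccdef
  have hcc0 : ∀ j, 0 ≤ cc j := by
    intro j
    by_cases h : j ≤ m <;> simp [hccdef, h, hc]
  have hccsum : ∀ (g : ℕ → ℝ), ∑ j ∈ Finset.range (m + 1), cc j * g j
      = ∑ j : Fin (m + 1), c j * g (j : ℕ) := by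
    intro g
    rw [← Fin.sum_univ_eq_sum_range (fun j => cc j * g j) (m + 1)]
    refine Finset.sum_congr rfl fun j _ => ?_
    simp [hccdef, j.isLt, Nat.not_lt.mpr (Nat.lt_succ_iff.mp j.isLt)]
  set φ : ℝ[X] := ∑ j ∈ Finset.range (m + 1),
      Polynomial.C (cc j) * (Polynomial.C 1 + Polynomial.C r⁻¹ * Polynomial.X) ^ j with hφdef
  have heval : ∀ (k : ℕ) (x : ℝ), ((Polynomial.derivative^[k]) φ).eval x
      = ∑ j ∈ Finset.range (m + 1),
          cc j * ((j.descFactorial k : ℝ) * r⁻¹ ^ k * (1 + r⁻¹ * x) ^ (j - k)) :=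
    fun k x => iterDeriv_sum_eval cc (m + 1) 1 r⁻¹ x k
  refine ⟨φ, ⟨?_, ?_⟩, ?_⟩
  · refine Polynomial.natDegree_sum_le_of_forall_le _ _ fun j hj => ?_
    refine le_trans (Polynomial.natDegree_C_mul_le _ _) ?_
    refine le_trans (Polynomial.natDegree_pow_le) ?_
    have hb : (Polynomial.C 1 + Polynomial.C r⁻¹ * Polynomial.X : ℝ[X]).natDegree ≤ 1 := by
      refine le_trans (Polynomial.natDegree_add_le _ _) ?_
      simp only [Polynomial.natDegree_C, max_le_iff]
      exact ⟨by omega, le_trans (Polynomial.natDegree_C_mul_le _ _) Polynomial.natDegree_X_le⟩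
    calc j * (Polynomial.C 1 + Polynomial.C r⁻¹ * Polynomial.X : ℝ[X]).natDegree
        ≤ j * 1 := Nat.mul_le_mul_left j hb
      _ = j := Nat.mul_one j
      _ ≤ m := by simpa using Nat.lt_succ_iff.mp (Finset.mem_range.mp hj)
  · intro k hk
    rw [heval k 0]
    have : ∑ j ∈ Finset.range (m + 1),
        cc j * ((j.descFactorial k : ℝ) * r⁻¹ ^ k * (1 + r⁻¹ * 0) ^ (j - k))
        = r⁻¹ ^ k * ∑ j ∈ Finset.range (m + 1), cc j * (j.descFactorial k : ℝ) := by
      rw [Finset.mul_sum]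
      refine Finset.sum_congr rfl fun j _ => by ring_nf
    rw [this, hccsum (fun j => ((j).descFactorial k : ℝ)), hmom k hk]
    field_simp
    rw [← mul_pow, one_div_mul_cancel hr.ne', one_pow]
  · intro k x hx
    rw [heval k x]
    refine Finset.sum_nonneg fun j _ => ?_
    have h1 : (0 : ℝ) ≤ 1 + r⁻¹ * x := by
      have hxr : -r ≤ x := hx.1
      have : r⁻¹ * x ≥ r⁻¹ * (-r) := by
        apply mul_le_mul_of_nonneg_left hxr (by positivity)
      have hrr : r⁻¹ * (-r) = -1 := by field_simp
      linarith [this, hrr ▸ this]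
    have h2 : (0 : ℝ) ≤ r⁻¹ ^ k := by positivity
    exact mul_nonneg (hcc0 j) (mul_nonneg (mul_nonneg (by positivity) h2) (pow_nonneg h1 _))

end Construction

section TruncExp

open Polynomial

/-- Truncated exponential polynomial. -/
def truncExp (N : ℕ) : ℝ[X] :=
  ∑ j ∈ Finset.range (N + 1), Polynomial.C ((j.factorial : ℝ)⁻¹) * Polynomial.X ^ j

lemma derivative_truncExp (N : ℕ) :
    Polynomial.derivative (truncExp (N + 1)) = truncExp N := by
  rw [truncExp, derivative_sum]
  rw [Finset.sum_range_succ' (fun j => Polynomial.derivative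
      (Polynomial.C ((j.factorial : ℝ)⁻¹) * Polynomial.X ^ j)) (N + 1)]
  have h0 : Polynomial.derivative (Polynomial.C ((Nat.factorial 0 : ℝ)⁻¹) * Polynomial.X ^ 0)
      = 0 := by simp
  rw [h0, add_zero]
  refine Finset.sum_congr rfl fun j _ => ?_
  rw [derivative_C_mul, derivative_X_pow]
  rw [show j + 1 - 1 = j from rfl]
  rw [← mul_assoc, ← Polynomial.C_mul]
  congr 2
  rw [Nat.factorial_succ]
  push_cast
  rw [mul_comm]
  have h1 : ((j:ℝ) + 1) ≠ 0 := by positivity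
  have h2 : ((j.factorial : ℝ)) ≠ 0 := by positivity
  field_simp

lemma iterate_derivative_truncExp (N k : ℕ) (hk : k ≤ N) :
    (Polynomial.derivative^[k]) (truncExp N) = truncExp (N - k) := by
  induction k with
  | zero => simp
  | succ l ih =>
      have hl : l ≤ N := by omega
      rw [Function.iterate_succ_apply', ih hl]
      have : N - l = (N - (l + 1)) + 1 := by omega
      rw [this, derivative_truncExp]

lemma truncExp_eval_nonneg (N : ℕ) (x : ℝ) (hx1 : -(1/2 : ℝ) ≤ x) (hx2 : x ≤ 0) :
    0 ≤ (truncExp N).eval x := by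
  have heval : (truncExp N).eval x = ∑ j ∈ Finset.range (N + 1), (j.factorial : ℝ)⁻¹ * x ^ j := by
    rw [truncExp, Polynomial.eval_finset_sum]
    simp
  rw [heval]
  rw [Finset.sum_range_succ' (fun j => (j.factorial : ℝ)⁻¹ * x ^ j) N]
  have h0 : ((Nat.factorial 0 : ℝ))⁻¹ * x ^ 0 = 1 := by simp
  rw [h0]
  have hb : ∀ j : ℕ, |((j + 1).factorial : ℝ)⁻¹ * x ^ (j + 1)| ≤ (1/2) ^ (j + 1) := by
    intro j
    rw [abs_mul, abs_pow]
    have h1 : |((j + 1).factorial : ℝ)⁻¹| ≤ 1 := by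
      rw [abs_inv, abs_of_nonneg (by positivity)]
      rw [inv_le_one_iff₀]
      right
      exact_mod_cast Nat.one_le_iff_ne_zero.mpr (Nat.factorial_ne_zero _)
    have h2 : |x| ≤ 1/2 := by
      rw [abs_le]
      constructor <;> linarith
    calc |((j + 1).factorial : ℝ)⁻¹| * |x| ^ (j + 1)
        ≤ 1 * (1/2) ^ (j + 1) := by
          exact mul_le_mul h1 (pow_le_pow_left₀ (abs_nonneg x) h2 _) (by positivity) zero_le_one
      _ = (1/2) ^ (j + 1) := one_mul _
  have hgeomeq : ∀ M : ℕ, ∑ j ∈ Finset.range M, ((1 : ℝ)/2) ^ (j + 1) = 1 - (1/2) ^ M := by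
    intro M
    induction M with
    | zero => simp
    | succ L ih => rw [Finset.sum_range_succ, ih]; ring
  have hgeom : ∑ j ∈ Finset.range N, ((1 : ℝ)/2) ^ (j + 1) ≤ 1 := by
    rw [hgeomeq N]
    have : (0:ℝ) ≤ (1/2) ^ N := by positivity
    linarith
  have habs : |∑ j ∈ Finset.range N, ((j + 1).factorial : ℝ)⁻¹ * x ^ (j + 1)| ≤ 1 := by
    calc |∑ j ∈ Finset.range N, ((j + 1).factorial : ℝ)⁻¹ * x ^ (j + 1)|
        ≤ ∑ j ∈ Finset.range N, |((j + 1).factorial : ℝ)⁻¹ * x ^ (j + 1)| :=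
          Finset.abs_sum_le_sum_abs _ _
      _ ≤ ∑ j ∈ Finset.range N, ((1:ℝ)/2) ^ (j + 1) :=
          Finset.sum_le_sum fun j _ => hb j
      _ ≤ 1 := hgeom
  have := abs_le.mp habs
  linarith [this.1]

end TruncExp

section TruncExpPiSet


lemma truncExp_eval_zero (M : ℕ) : (truncExp M).eval 0 = 1 := by
  rw [truncExp, Polynomial.eval_finset_sum]
  rw [Finset.sum_range_succ']
  simp

lemma truncExp_mem_PiSet (m n : ℕ) (hmn : n ≤ m) : truncExp n ∈ PiSet m n := by
  constructor
  · refine Polynomial.natDegree_sum_le_of_forall_le _ _ fun j hj => ?_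
    refine le_trans (Polynomial.natDegree_C_mul_le _ _) ?_
    refine le_trans (Polynomial.natDegree_pow_le) ?_
    have := Finset.mem_range.mp hj
    calc j * (Polynomial.X : ℝ[X]).natDegree ≤ j * 1 :=
          Nat.mul_le_mul_left j Polynomial.natDegree_X_le
      _ = j := Nat.mul_one j
      _ ≤ m := by omega
  · intro k hk
    rw [iterate_derivative_truncExp n k hk, truncExp_eval_zero]

lemma truncExp_am (n : ℕ) : AbsolutelyMonotonicOn (truncExp n) (-(1/2 : ℝ)) 0 := by
  intro k x hx
  rcases le_or_gt k n with hk | hk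
  · rw [iterate_derivative_truncExp n k hk]
    exact truncExp_eval_nonneg _ x hx.1 hx.2
  · have h1 : Polynomial.derivative^[k] (truncExp n)
        = Polynomial.derivative^[k - n] (Polynomial.derivative^[n] (truncExp n)) := by
      rw [← Function.iterate_add_apply]
      congr 1
      omega
    rw [h1, iterate_derivative_truncExp n n (le_refl n), Nat.sub_self]
    have h2 : truncExp 0 = Polynomial.C (1 : ℝ) := by
      simp [truncExp]
    rw [h2]
    obtain ⟨t, ht⟩ : ∃ t, k - n = t + 1 := ⟨k - n - 1, by omega⟩
    rw [ht]
    simp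

end TruncExpPiSet

section HpolyIff

open Polynomial

lemma Eform_coeff (g : ℕ → ℝ) (N k : ℕ) (hk : k < N) :
    (∑ l ∈ Finset.range N, Polynomial.C (g l) * Polynomial.X ^ l).coeff k = g k := by
  rw [Polynomial.finset_sum_coeff]
  simp [Polynomial.coeff_C_mul, Polynomial.coeff_X_pow]
  intro h
  omega

lemma sum_pow_expand {s : ℕ} (p : Fin s → ℕ) (α : Fin s → ℝ) (n : ℕ) :
    ∑ i : Fin s, Polynomial.C (α i) * (Polynomial.X - Polynomial.C ((p i : ℕ) : ℝ)) ^ n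
      = ∑ k ∈ Finset.range (n + 1),
          Polynomial.C ((n.choose k : ℝ) * (∑ i : Fin s, α i * (-((p i : ℕ) : ℝ)) ^ (n - k)))
            * Polynomial.X ^ k := by
  have hexp : ∀ i : Fin s,
      Polynomial.C (α i) * (Polynomial.X - Polynomial.C ((p i : ℕ) : ℝ)) ^ n
        = ∑ k ∈ Finset.range (n + 1),
            Polynomial.C (α i * (-((p i : ℕ) : ℝ)) ^ (n - k) * (n.choose k : ℝ))
              * Polynomial.X ^ k := by
    intro i
    have h1 : (Polynomial.X - Polynomial.C ((p i : ℕ) : ℝ))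
        = Polynomial.X + Polynomial.C (-((p i : ℕ) : ℝ)) := by
      rw [map_neg, sub_eq_add_neg]
    rw [h1, add_pow, Finset.mul_sum]
    refine Finset.sum_congr rfl fun k _ => ?_
    rw [← map_pow, map_mul, map_mul]
    have h2 : ((n.choose k : ℕ) : ℝ[X]) = Polynomial.C ((n.choose k : ℕ) : ℝ) := by
      simp
    rw [h2]
    ring
  rw [Finset.sum_congr rfl fun i _ => hexp i, Finset.sum_comm]
  refine Finset.sum_congr rfl fun k _ => ?_
  rw [← Finset.sum_mul, ← map_sum]
  congr 2
  rw [Finset.mul_sum]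
  exact Finset.sum_congr rfl fun i _ => by ring

lemma Hpoly_eval_iff (n : ℕ) (R : ℝ) {s : ℕ} (p : Fin s → ℕ) (α : Fin s → ℝ) :
    (∀ x : ℝ, (Hpoly n R).eval x = ∑ i : Fin s, α i * (x - ((p i : ℕ) : ℝ)) ^ n)
      ↔ ∀ i ≤ n, ∑ j : Fin s, α j * (((p j : ℕ) : ℝ)) ^ i = (touchard i).eval R := by
  set Q : ℝ[X] := ∑ i : Fin s, Polynomial.C (α i)
      * (Polynomial.X - Polynomial.C ((p i : ℕ) : ℝ)) ^ n with hQdef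
  have hevalQ : ∀ x : ℝ, Q.eval x = ∑ i : Fin s, α i * (x - ((p i : ℕ) : ℝ)) ^ n := by
    intro x
    rw [hQdef, Polynomial.eval_finset_sum]
    refine Finset.sum_congr rfl fun i _ => ?_
    simp
  have hcoeff_iff : ∀ k, k ≤ n →
      ((Hpoly n R).coeff k = Q.coeff k
        ↔ (-1 : ℝ) ^ (n - k) * (n.choose k : ℝ) * (touchard (n - k)).eval R
            = (n.choose k : ℝ) * (∑ i : Fin s, α i * (-((p i : ℕ) : ℝ)) ^ (n - k))) := by
    intro k hk
    rw [show Hpoly n R = ∑ l ∈ Finset.range (n + 1),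
        Polynomial.C ((-1 : ℝ) ^ (n - l) * (n.choose l : ℝ) * (touchard (n - l)).eval R)
          * Polynomial.X ^ l from rfl]
    rw [Eform_coeff _ (n + 1) k (by omega)]
    rw [hQdef, sum_pow_expand, Eform_coeff _ (n + 1) k (by omega)]
  have hscal : ∀ k, k ≤ n →
      (((-1 : ℝ) ^ (n - k) * (n.choose k : ℝ) * (touchard (n - k)).eval R
          = (n.choose k : ℝ) * (∑ i : Fin s, α i * (-((p i : ℕ) : ℝ)) ^ (n - k)))
        ↔ (∑ j : Fin s, α j * (((p j : ℕ) : ℝ)) ^ (n - k) = (touchard (n - k)).eval R)) := by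
    intro k hk
    have hchoose : ((n.choose k : ℕ) : ℝ) ≠ 0 :=
      Nat.cast_ne_zero.mpr (Nat.choose_pos hk).ne'
    have hsgn : ((-1 : ℝ) ^ (n - k)) ≠ 0 := pow_ne_zero _ (by norm_num)
    have hsum : ∑ i : Fin s, α i * (-((p i : ℕ) : ℝ)) ^ (n - k)
        = (-1 : ℝ) ^ (n - k) * ∑ i : Fin s, α i * (((p i : ℕ) : ℝ)) ^ (n - k) := by
      rw [Finset.mul_sum]
      refine Finset.sum_congr rfl fun i _ => ?_
      rw [neg_pow]
      ring
    rw [hsum]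
    constructor
    · intro h
      have h2 : ((-1 : ℝ) ^ (n - k) * (n.choose k : ℝ)) * (touchard (n - k)).eval R
          = ((-1 : ℝ) ^ (n - k) * (n.choose k : ℝ))
              * ∑ i : Fin s, α i * (((p i : ℕ) : ℝ)) ^ (n - k) := by
        linear_combination h
      exact (mul_left_cancel₀ (mul_ne_zero hsgn hchoose) h2).symm
    · intro h
      rw [← h]
      ring
  constructor
  · intro h i hi
    have hpq : Hpoly n R = Q := Polynomial.funext fun x => by rw [h x, hevalQ x]
    have hk : n - i ≤ n := by omega
    have h1 := (hcoeff_iff (n - i) hk).mp (by rw [hpq])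
    have h2 := (hscal (n - i) hk).mp h1
    rwa [show n - (n - i) = i by omega] at h2
  · intro h x
    have hpq : Hpoly n R = Q := by
      rw [show Hpoly n R = ∑ l ∈ Finset.range (n + 1),
          Polynomial.C ((-1 : ℝ) ^ (n - l) * (n.choose l : ℝ) * (touchard (n - l)).eval R)
            * Polynomial.X ^ l from rfl]
      rw [hQdef, sum_pow_expand]
      refine Finset.sum_congr rfl fun k hkmem => ?_
      have hk : k ≤ n := by
        have := Finset.mem_range.mp hkmem; omega
      congr 1
      congr 1
      exact (hscal k hk).mpr (h (n - k) (by omega))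
    rw [hpq, hevalQ x]
end HpolyIff

section Mset


/-- The feasibility set: nonnegative weights on `{0,…,m}` matching the Touchard
(Poisson power-moment) values up to order `n`. -/
def Mset (m n : ℕ) : Set ℝ :=
  {R : ℝ | 0 ≤ R ∧ ∃ c : Fin (m + 1) → ℝ, (∀ j, 0 ≤ c j) ∧
    ∀ i ≤ n, ∑ j : Fin (m + 1), c j * (((j : ℕ) : ℝ)) ^ i = (touchard i).eval R}

lemma touchard_eval_zero (i : ℕ) : (touchard i).eval 0 = (0 : ℝ) ^ i := by
  cases i with
  | zero => simp [touchard]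
  | succ l =>
      rw [show touchard (l + 1)
        = Polynomial.X * (touchard l + Polynomial.derivative (touchard l)) from rfl]
      simp

lemma zero_mem_Mset (m n : ℕ) : (0 : ℝ) ∈ Mset m n := by
  refine ⟨le_refl _, fun j => if j = 0 then 1 else 0, fun j => by positivity, ?_⟩
  intro i _
  rw [touchard_eval_zero]
  have : ∀ j : Fin (m + 1), (if j = 0 then (1:ℝ) else 0) * (((j : ℕ) : ℝ)) ^ i
      = if j = 0 then (((j : ℕ) : ℝ)) ^ i else 0 := by
    intro j; split <;> simp
  rw [Finset.sum_congr rfl fun j _ => this j]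
  rw [Finset.sum_ite_eq' Finset.univ (0 : Fin (m + 1)) (fun j => (((j : ℕ) : ℝ)) ^ i)]
  simp

lemma Mset_sum_one (m n : ℕ) {R : ℝ} {c : Fin (m + 1) → ℝ}
    (hmom : ∀ i ≤ n, ∑ j : Fin (m + 1), c j * (((j : ℕ) : ℝ)) ^ i = (touchard i).eval R) :
    ∑ j : Fin (m + 1), c j = 1 := by
  have h0 := hmom 0 (Nat.zero_le n)
  have ht : (touchard 0).eval R = 1 := by simp [touchard]
  rw [ht] at h0
  rw [← h0]
  exact Finset.sum_congr rfl fun j _ => by simp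

lemma Mset_le (m n : ℕ) (hn : 1 ≤ n) {R : ℝ} (hR : R ∈ Mset m n) : R ≤ m := by
  obtain ⟨_, c, hc0, hmom⟩ := hR
  have hsum := Mset_sum_one m n hmom
  have h1 := hmom 1 hn
  have ht : (touchard 1).eval R = R := by
    rw [show touchard 1 = Polynomial.X * (touchard 0 + Polynomial.derivative (touchard 0)) from rfl]
    simp [touchard]
  rw [ht] at h1
  have hle : ∑ j : Fin (m + 1), c j * (((j : ℕ) : ℝ)) ^ 1 ≤ ∑ j : Fin (m + 1), c j * m := by
    refine Finset.sum_le_sum fun j _ => ?_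
    refine mul_le_mul_of_nonneg_left ?_ (hc0 j)
    rw [pow_one]
    exact_mod_cast Nat.lt_succ_iff.mp j.isLt
  rw [h1] at hle
  calc R ≤ ∑ j : Fin (m + 1), c j * m := hle
    _ = (∑ j : Fin (m + 1), c j) * m := by rw [← Finset.sum_mul]
    _ = m := by rw [hsum, one_mul]

lemma isCompact_Mset (m n : ℕ) (hn : 1 ≤ n) : IsCompact (Mset m n) := by
  set A : Set (ℝ × (Fin (m + 1) → ℝ)) :=
    (Set.Icc (0 : ℝ) m) ×ˢ (Set.pi Set.univ fun _ : Fin (m + 1) => Set.Icc (0 : ℝ) 1) with hA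
  set B : Set (ℝ × (Fin (m + 1) → ℝ)) :=
    ⋂ i ∈ Set.Iic n, {x : ℝ × (Fin (m + 1) → ℝ) |
      (∑ j : Fin (m + 1), x.2 j * (((j : ℕ) : ℝ)) ^ i) = (touchard i).eval x.1} with hB
  have hAcpt : IsCompact A :=
    isCompact_Icc.prod (isCompact_univ_pi fun _ => isCompact_Icc)
  have hAclosed : IsClosed A :=
    isClosed_Icc.prod (isClosed_set_pi fun _ _ => isClosed_Icc)
  have hBclosed : IsClosed B := by
    refine isClosed_biInter fun i _ => isClosed_eq ?_ ?_
    · exact continuous_finset_sum _ fun j _ =>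
        ((continuous_apply j).comp continuous_snd).mul continuous_const
    · exact (Polynomial.continuous (touchard i)).comp continuous_fst
  have hKcpt : IsCompact (A ∩ B) :=
    hAcpt.of_isClosed_subset (hAclosed.inter hBclosed) Set.inter_subset_left
  have himg : Mset m n = Prod.fst '' (A ∩ B) := by
    ext R
    constructor
    · rintro ⟨hR0, c, hc0, hmom⟩
      refine ⟨(R, c), ⟨⟨⟨hR0, Mset_le m n hn ⟨hR0, c, hc0, hmom⟩⟩, ?_⟩, ?_⟩, rfl⟩
      · intro j _
        refine ⟨hc0 j, ?_⟩
        have := Mset_sum_one m n hmom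
        rw [← this]
        exact Finset.single_le_sum (fun i _ => hc0 i) (Finset.mem_univ j)
      · simp only [hB, Set.mem_iInter, Set.mem_setOf_eq]
        intro i hi
        exact hmom i hi
    · rintro ⟨⟨R', c⟩, ⟨⟨hRIcc, hcpi⟩, hBmem⟩, rfl⟩
      simp only [hB, Set.mem_iInter, Set.mem_setOf_eq] at hBmem
      exact ⟨hRIcc.1, c, fun j => (hcpi j (Set.mem_univ j)).1, fun i hi => hBmem i hi⟩
  rw [himg]
  exact hKcpt.image continuous_fst

end Mset

theorem statement7 (m n : ℕ) (hn : 1 ≤ n) (hmn : n ≤ m) :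
    IsGreatest
      {R : ℝ | 0 < R ∧ ∃ s : ℕ, 1 ≤ s ∧ ∃ ms : Fin s → ℕ, StrictMono ms ∧
        (∀ i, ms i ≤ m) ∧ ∃ α : Fin s → ℝ, (∀ i, 0 ≤ α i) ∧
        ∀ x : ℝ, (Hpoly n R).eval x = ∑ i : Fin s, α i * (x - (ms i : ℝ)) ^ n}
      (Ropt m n) := by
  classical
  set M : Set ℝ := Mset m n with hMdef
  have hM0 : (0 : ℝ) ∈ M := zero_mem_Mset m n
  have hMne : M.Nonempty := ⟨0, hM0⟩
  have hMcpt : IsCompact M := isCompact_Mset m n hn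
  have hMbdd : BddAbove M := hMcpt.bddAbove
  -- 1/2 belongs to M via the truncated exponential
  have hhalf : (1 / 2 : ℝ) ∈ M := by
    obtain ⟨c, hc0, hcmom⟩ := am_to_desc_moments m n (truncExp n)
      (truncExp_mem_PiSet m n hmn) (1 / 2) (by norm_num) (truncExp_am n)
    exact ⟨by norm_num, c, hc0,
      (desc_moments_iff (fun j : Fin (m + 1) => (j : ℕ)) c n (1 / 2)).mp hcmom⟩
  set Rs : ℝ := sSup M with hRsdef
  have hRsM : Rs ∈ M := hMcpt.sSup_mem hMne
  have hRs_pos : 0 < Rs := lt_of_lt_of_le (by norm_num) (le_csSup hMbdd hhalf)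
  -- every radius of absolute monotonicity of a `PiSet` polynomial lies in `M`
  have hTsub : ∀ φ ∈ PiSet m n,
      {r : ℝ | r = 0 ∨ (0 < r ∧ AbsolutelyMonotonicOn φ (-r) 0)} ⊆ M := by
    intro φ hφ r hr
    rcases hr with rfl | ⟨hrpos, ham⟩
    · exact hM0
    · obtain ⟨c, hc0, hcmom⟩ := am_to_desc_moments m n φ hφ r hrpos ham
      exact ⟨hrpos.le, c, hc0,
        (desc_moments_iff (fun j : Fin (m + 1) => (j : ℕ)) c n r).mp hcmom⟩
  have hthr_le : ∀ φ ∈ PiSet m n, thresholdFactor φ ≤ Rs := by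
    intro φ hφ
    rw [thresholdFactor]
    exact csSup_le ⟨0, Or.inl rfl⟩ fun r hr => le_csSup hMbdd (hTsub φ hφ hr)
  have himg_ne : (thresholdFactor '' PiSet m n).Nonempty :=
    ⟨_, Set.mem_image_of_mem _ (truncExp_mem_PiSet m n hmn)⟩
  have himg_bdd : BddAbove (thresholdFactor '' PiSet m n) := by
    refine ⟨Rs, ?_⟩
    rintro y ⟨φ, hφ, rfl⟩
    exact hthr_le φ hφ
  have hRopt_le : Ropt m n ≤ Rs := by
    rw [Ropt]
    refine csSup_le himg_ne ?_
    rintro y ⟨φ, hφ, rfl⟩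
    exact hthr_le φ hφ
  -- the reverse inequality via the construction
  obtain ⟨hRs0, c, hc0, hcpow⟩ := hRsM
  have hcdesc := (desc_moments_iff (fun j : Fin (m + 1) => (j : ℕ)) c n Rs).mpr hcpow
  obtain ⟨φs, hφsPi, hφsAM⟩ := desc_moments_to_am m n Rs hRs_pos c hc0 hcdesc
  have hT_bdd : BddAbove {r : ℝ | r = 0 ∨ (0 < r ∧ AbsolutelyMonotonicOn φs (-r) 0)} :=
    ⟨Rs, fun r hr => le_csSup hMbdd (hTsub φs hφsPi hr)⟩
  have hRs_le_Ropt : Rs ≤ Ropt m n := by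
    have h1 : Rs ≤ thresholdFactor φs := by
      rw [thresholdFactor]
      exact le_csSup hT_bdd (Or.inr ⟨hRs_pos, hφsAM⟩)
    have h2 : thresholdFactor φs ≤ Ropt m n := by
      rw [Ropt]
      exact le_csSup himg_bdd (Set.mem_image_of_mem _ hφsPi)
    exact h1.trans h2
  have hRopt_eq : Ropt m n = Rs := le_antisymm hRopt_le hRs_le_Ropt
  constructor
  · -- membership in the representation set
    rw [hRopt_eq]
    refine ⟨hRs_pos, m + 1, by omega, fun i : Fin (m + 1) => (i : ℕ),
      Fin.val_strictMono, fun i => Nat.lt_succ_iff.mp i.isLt, c, hc0, ?_⟩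
    exact (Hpoly_eval_iff n Rs (fun i : Fin (m + 1) => (i : ℕ)) c).mpr hcpow
  · -- upper bound
    rintro R ⟨hRpos, s, hs, ms, hmono, hmsle, αw, hα0, hid⟩
    have hpow := (Hpoly_eval_iff n R ms αw).mp hid
    set g : Fin s → Fin (m + 1) := fun i => ⟨ms i, Nat.lt_succ_of_le (hmsle i)⟩ with hgdef
    set cv : Fin (m + 1) → ℝ :=
      fun j => ∑ i ∈ Finset.univ.filter (fun i => g i = j), αw i with hcvdef
    have hcv0 : ∀ j, 0 ≤ cv j := fun j => Finset.sum_nonneg fun i _ => hα0 i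
    have hcvmom : ∀ i ≤ n,
        ∑ j : Fin (m + 1), cv j * (((j : ℕ) : ℝ)) ^ i = (touchard i).eval R := by
      intro e he
      rw [← hpow e he]
      calc ∑ j : Fin (m + 1), cv j * (((j : ℕ) : ℝ)) ^ e
          = ∑ j : Fin (m + 1), ∑ i ∈ Finset.univ.filter (fun i => g i = j),
              αw i * (((j : ℕ) : ℝ)) ^ e := by
            refine Finset.sum_congr rfl fun j _ => ?_
            rw [hcvdef]
            rw [Finset.sum_mul]
        _ = ∑ j : Fin (m + 1), ∑ i ∈ Finset.univ.filter (fun i => g i = j),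
              αw i * (((ms i : ℕ) : ℝ)) ^ e := by
            refine Finset.sum_congr rfl fun j _ => Finset.sum_congr rfl fun i hi => ?_
            have hgi : g i = j := (Finset.mem_filter.mp hi).2
            have : (ms i : ℕ) = (j : ℕ) := by
              rw [← hgi]
            rw [this]
        _ = ∑ i : Fin s, αw i * (((ms i : ℕ) : ℝ)) ^ e :=
            Finset.sum_fiberwise Finset.univ g (fun i => αw i * (((ms i : ℕ) : ℝ)) ^ e)
    have hRM : R ∈ M := ⟨hRpos.le, cv, hcv0, hcvmom⟩
    rw [hRopt_eq]
    exact le_csSup hMbdd hRM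
end
end

section
/- For every nonnegative integer n and every real number R > 0, the following two identities hold: (1) t^n = Σ_{j=0}^{n} (B_n^{(j)}(R)/j!) · C_j(t,R) as an identity of polynomials in t, where B_n^{(j)} denotes the j-th derivative of the Touchard polynomial B_n; and (2) ∫ t^n dμ_R(t) = B_n(R), i.e., e^{−R} Σ_{j=0}^{∞} j^n R^j/j! = B_n(R). -/
open Polynomial

noncomputable section

/-- The monic Poisson–Charlier polynomials `C_n(·, R)`. -/
def charlier (R : ℝ) : ℕ → Polynomial ℝ
  | 0 => 1
  | 1 => Polynomial.X - Polynomial.C R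
  | (n + 2) =>
      (Polynomial.X - Polynomial.C (R + ((n : ℝ) + 1))) * charlier R (n + 1) -
        Polynomial.C (((n : ℝ) + 1) * R) * charlier R n

lemma touchard_natDegree (n : ℕ) : (touchard n).natDegree ≤ n := by
  induction n with
  | zero => simp [touchard]
  | succ n ih =>
    have h1 : (touchard (n+1)).natDegree ≤
        (X : ℝ[X]).natDegree + (touchard n + derivative (touchard n)).natDegree :=
      natDegree_mul_le
    have h2 := natDegree_add_le (touchard n) (derivative (touchard n))
    have h3 := (natDegree_derivative_le (touchard n)).trans (Nat.sub_le _ 1)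
    rw [natDegree_X] at h1
    omega

lemma touchard_iterate_zero (n j : ℕ) (h : n < j) :
    (Polynomial.derivative)^[j] (touchard n) = 0 :=
  Polynomial.iterate_derivative_eq_zero (lt_of_le_of_lt (touchard_natDegree n) h)

lemma iter_deriv_X_mul (q : Polynomial ℝ) (j : ℕ) :
    (Polynomial.derivative)^[j+1] (X * q) =
      X * (Polynomial.derivative)^[j+1] q
        + Polynomial.C (((j+1 : ℕ)) : ℝ) * (Polynomial.derivative)^[j] q := by
  induction j with
  | zero => simp [derivative_mul]; ring
  | succ j ih =>
    rw [Function.iterate_succ_apply' Polynomial.derivative (j+1) (X*q), ih, derivative_add,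
      derivative_mul, derivative_mul, derivative_X, derivative_C,
      ← Function.iterate_succ_apply' Polynomial.derivative (j+1) q,
      ← Function.iterate_succ_apply' Polynomial.derivative j q]
    have : (((j+2 : ℕ)) : ℝ) = ((j+1 : ℕ) : ℝ) + 1 := by push_cast; ring
    rw [this, Polynomial.C_add, Polynomial.C_1]
    ring

lemma charlier_rec (R : ℝ) (j : ℕ) :
    X * charlier R j = charlier R (j+1) + Polynomial.C (R + (j:ℝ)) * charlier R j
      + Polynomial.C ((j:ℝ) * R) * charlier R (j-1) := by
  match j with
  | 0 => simp [charlier]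
  | (m+1) =>
    rw [show charlier R (m+2) =
        (X - Polynomial.C (R + ((m : ℝ) + 1))) * charlier R (m + 1) -
          Polynomial.C (((m : ℝ) + 1) * R) * charlier R m from rfl]
    push_cast
    ring

def dco (R : ℝ) (n j : ℕ) : ℝ :=
  ((Polynomial.derivative)^[j] (touchard n)).eval R / (j.factorial : ℝ)

lemma dco_zero (R : ℝ) {n j : ℕ} (h : n < j) : dco R n j = 0 := by
  simp [dco, touchard_iterate_zero n j h]

lemma dco_succ_zero (R : ℝ) (n : ℕ) : dco R (n+1) 0 = R * dco R n 0 + R * dco R n 1 := by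
  simp only [dco, Function.iterate_zero, Function.iterate_one, id_eq, Nat.factorial_zero,
    Nat.factorial_one, Nat.cast_one, div_one]
  rw [show touchard (n+1) = X * (touchard n + derivative (touchard n)) from rfl]
  rw [eval_mul, eval_X, eval_add]
  ring

lemma dco_succ_succ (R : ℝ) (n j : ℕ) :
    dco R (n+1) (j+1)
      = dco R n j + (R + ((j:ℝ)+1)) * dco R n (j+1) + (((j:ℝ)+2)) * R * dco R n (j+2) := by
  have h := iter_deriv_X_mul (touchard n + derivative (touchard n)) j
  have hadd : ∀ k : ℕ, (Polynomial.derivative)^[k] (touchard n + derivative (touchard n))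
      = (Polynomial.derivative)^[k] (touchard n) + (Polynomial.derivative)^[k+1] (touchard n) := by
    intro k
    induction k with
    | zero => simp
    | succ k ihk =>
      rw [Function.iterate_succ_apply' Polynomial.derivative k, ihk, derivative_add,
        ← Function.iterate_succ_apply' Polynomial.derivative k,
        ← Function.iterate_succ_apply' Polynomial.derivative (k+1)]
  rw [hadd (j+1), hadd j] at h
  unfold dco
  rw [show touchard (n+1) = X * (touchard n + derivative (touchard n)) from rfl, h]
  simp only [eval_add, eval_mul, eval_X, eval_C]
  have f1 : (((j+1).factorial : ℕ) : ℝ) = ((j:ℝ)+1) * (j.factorial : ℝ) := by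
    rw [Nat.factorial_succ]; push_cast; ring
  have f2 : (((j+2).factorial : ℕ) : ℝ) = ((j:ℝ)+2) * (((j+1).factorial : ℕ) : ℝ) := by
    rw [show j+2 = (j+1)+1 from rfl, Nat.factorial_succ]; push_cast; ring
  have h0 : ((j.factorial : ℕ) : ℝ) ≠ 0 := by positivity
  have h1 : ((j:ℝ)+1) ≠ 0 := by positivity
  have h2 : ((j:ℝ)+2) ≠ 0 := by positivity
  rw [f2, f1]
  push_cast
  field_simp
  ring

lemma part1 (R : ℝ) (n : ℕ) :
    (X : ℝ[X])^n = ∑ j ∈ Finset.range (n+1), Polynomial.C (dco R n j) * charlier R j := by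
  induction n with
  | zero => simp [dco, touchard, charlier]
  | succ n IH =>
    have hz1 : dco R n (n+1) = 0 := dco_zero R (by omega)
    have hz2 : dco R n (n+2) = 0 := dco_zero R (by omega)
    have step1 : (X : ℝ[X])^(n+1)
        = ∑ j ∈ Finset.range (n+3), Polynomial.C (dco R n j) * (X * charlier R j) := by
      rw [Finset.sum_range_succ, Finset.sum_range_succ, hz1, hz2]
      simp only [Polynomial.C_0, zero_mul, add_zero]
      rw [pow_succ, IH, Finset.sum_mul]
      exact Finset.sum_congr rfl fun j _ => by ring
    have step2 : ∑ j ∈ Finset.range (n+3), Polynomial.C (dco R n j) * (X * charlier R j)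
        = (∑ j ∈ Finset.range (n+3), Polynomial.C (dco R n j) * charlier R (j+1))
          + (∑ j ∈ Finset.range (n+3),
              Polynomial.C (dco R n j) * (Polynomial.C (R + (j:ℝ)) * charlier R j))
          + ∑ j ∈ Finset.range (n+3),
              Polynomial.C (dco R n j) * (Polynomial.C ((j:ℝ) * R) * charlier R (j-1)) := by
      rw [← Finset.sum_add_distrib, ← Finset.sum_add_distrib]
      exact Finset.sum_congr rfl fun j _ => by rw [charlier_rec]; ring
    have hS1 : ∑ j ∈ Finset.range (n+3), Polynomial.C (dco R n j) * charlier R (j+1)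
        = ∑ j ∈ Finset.range (n+1), Polynomial.C (dco R n j) * charlier R (j+1) := by
      rw [Finset.sum_range_succ, Finset.sum_range_succ, hz1, hz2]
      simp
    have hS2 : ∑ j ∈ Finset.range (n+3),
          Polynomial.C (dco R n j) * (Polynomial.C (R + (j:ℝ)) * charlier R j)
        = (∑ i ∈ Finset.range (n+1),
            Polynomial.C (dco R n (i+1)) * (Polynomial.C (R + ((i+1:ℕ):ℝ)) * charlier R (i+1)))
          + Polynomial.C (dco R n 0) * (Polynomial.C (R + ((0:ℕ):ℝ)) * charlier R 0) := by
      rw [Finset.sum_range_succ' _ (n+2)]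
      congr 1
      rw [Finset.sum_range_succ, hz2]
      simp
    have hS3 : ∑ j ∈ Finset.range (n+3),
          Polynomial.C (dco R n j) * (Polynomial.C ((j:ℝ) * R) * charlier R (j-1))
        = (∑ i ∈ Finset.range (n+1),
            Polynomial.C (dco R n (i+2)) * (Polynomial.C (((i+2:ℕ):ℝ) * R) * charlier R (i+1)))
          + Polynomial.C (dco R n 1) * (Polynomial.C (((1:ℕ):ℝ) * R) * charlier R 0) := by
      rw [Finset.sum_range_succ' _ (n+2)]
      have hg0 : Polynomial.C (dco R n 0) * (Polynomial.C (((0:ℕ):ℝ) * R) * charlier R (0-1))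
          = 0 := by
        simp
      rw [hg0, add_zero]
      simp only [Nat.add_sub_cancel]
      rw [Finset.sum_range_succ' _ (n+1)]
      try norm_num
    have hterm : ∀ i ∈ Finset.range (n+1),
        Polynomial.C (dco R (n+1) (i+1)) * charlier R (i+1)
          = Polynomial.C (dco R n i) * charlier R (i+1)
            + Polynomial.C (dco R n (i+1)) *
                (Polynomial.C (R + ((i+1:ℕ):ℝ)) * charlier R (i+1))
            + Polynomial.C (dco R n (i+2)) *
                (Polynomial.C (((i+2:ℕ):ℝ) * R) * charlier R (i+1)) := by
      intro i _
      rw [dco_succ_succ]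
      push_cast
      simp only [Polynomial.C_add, Polynomial.C_mul, Polynomial.C_1, Polynomial.C_0,
        add_zero, mul_one, mul_zero, one_mul, zero_mul]
      try ring
    have hconst : Polynomial.C (dco R (n+1) 0) * charlier R 0
        = Polynomial.C (dco R n 0) * (Polynomial.C (R + ((0:ℕ):ℝ)) * charlier R 0)
          + Polynomial.C (dco R n 1) * (Polynomial.C (((1:ℕ):ℝ) * R) * charlier R 0) := by
      rw [dco_succ_zero]
      push_cast
      simp only [Polynomial.C_add, Polynomial.C_mul, Polynomial.C_1, Polynomial.C_0,
        add_zero, mul_one, mul_zero, one_mul, zero_mul]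
      try ring
    rw [step1, step2, hS1, hS2, hS3]
    rw [Finset.sum_range_succ' _ (n+1), Finset.sum_congr rfl hterm, hconst,
      Finset.sum_add_distrib, Finset.sum_add_distrib]
    abel

lemma touchard_deriv (n : ℕ) : derivative (touchard n) =
    ∑ k ∈ Finset.range n, Polynomial.C ((n.choose k : ℕ) : ℝ) * touchard k := by
  induction n with
  | zero => simp [touchard]
  | succ n ih =>
    have hB'' : derivative (derivative (touchard n)) =
        ∑ k ∈ Finset.range n, Polynomial.C ((n.choose k : ℕ) : ℝ) * derivative (touchard k) := by
      rw [ih, derivative_sum]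
      simp [derivative_mul]
    have lhs : derivative (touchard (n + 1)) =
        (touchard n + derivative (touchard n)) +
          X * (derivative (touchard n) + derivative (derivative (touchard n))) := by
      show derivative (X * (touchard n + derivative (touchard n))) = _
      rw [derivative_mul, derivative_X, derivative_add]
      ring
    have key : ∀ k, touchard (k + 1) = X * (touchard k + derivative (touchard k)) := fun k => rfl
    have piece1 : ∑ i ∈ Finset.range n, Polynomial.C ((n.choose i : ℕ) : ℝ) * touchard (i+1)
        = X * (derivative (touchard n) + derivative (derivative (touchard n))) := by
      rw [hB'', ih, mul_add, Finset.mul_sum, Finset.mul_sum, ← Finset.sum_add_distrib]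
      refine Finset.sum_congr rfl fun i _ => ?_
      rw [key i]
      ring
    have piece2 : ∑ i ∈ Finset.range n, Polynomial.C ((n.choose (i+1) : ℕ) : ℝ) * touchard (i+1)
        = derivative (touchard n) + touchard n - touchard 0 := by
      have h := Finset.sum_range_succ' (fun k => Polynomial.C ((n.choose k : ℕ) : ℝ) * touchard k) n
      rw [Finset.sum_range_succ, ← ih, Nat.choose_self, Nat.choose_zero_right] at h
      simp only [Nat.cast_one, Polynomial.C_1, one_mul] at h
      linear_combination -h
    rw [lhs, Finset.sum_range_succ' _ n]
    have expand : ∑ i ∈ Finset.range n, Polynomial.C ((((n+1)).choose (i+1) : ℕ) : ℝ) * touchard (i+1)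
        = (∑ i ∈ Finset.range n, Polynomial.C ((n.choose i : ℕ) : ℝ) * touchard (i+1))
          + ∑ i ∈ Finset.range n, Polynomial.C ((n.choose (i+1) : ℕ) : ℝ) * touchard (i+1) := by
      rw [← Finset.sum_add_distrib]
      refine Finset.sum_congr rfl fun i _ => ?_
      rw [Nat.choose_succ_succ]
      push_cast
      rw [Polynomial.C_add]
      ring
    rw [expand, piece1, piece2]
    simp only [Nat.choose_zero_right, Nat.cast_one, Polynomial.C_1, one_mul]
    ring

set_option maxHeartbeats 1000000 in
lemma summable_aux (n : ℕ) (R : ℝ) (hR : 0 < R) :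
    Summable (fun j : ℕ => (j : ℝ) ^ n * R ^ j / (j.factorial : ℝ)) := by
  have h1 : Summable (fun j : ℕ => (j : ℝ) ^ n * (1/2 : ℝ) ^ j) :=
    summable_pow_mul_geometric_of_norm_lt_one n
      (by rw [Real.norm_eq_abs, abs_of_nonneg (by norm_num : (0:ℝ) ≤ 1/2)]; norm_num)
  obtain ⟨C, hC⟩ := h1.tendsto_atTop_zero.bddAbove_range
  have hg : Summable (fun j : ℕ => C * ((2*R)^j / (j.factorial : ℝ))) :=
    (Real.summable_pow_div_factorial (2*R)).mul_left C
  refine Summable.of_nonneg_of_le (fun j => by positivity) (fun j => ?_) hg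
  have hb : (j:ℝ)^n * (1/2:ℝ)^j ≤ C := hC (Set.mem_range_self j)
  have hkey : (j:ℝ)^n * R^j / (j.factorial : ℝ)
      = ((j:ℝ)^n * (1/2:ℝ)^j) * ((2*R)^j / (j.factorial : ℝ)) := by
    rw [mul_pow]
    have : ((1:ℝ)/2)^j * (2:ℝ)^j = 1 := by
      rw [← mul_pow]; norm_num
    field_simp
    linear_combination (-(j:ℝ)^n) * this
  rw [hkey]
  exact mul_le_mul_of_nonneg_right hb (by positivity)

lemma tsum_touchard (R : ℝ) (hR : 0 < R) (n : ℕ) :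
    ∑' j : ℕ, (j : ℝ) ^ n * R ^ j / (j.factorial : ℝ) = Real.exp R * (touchard n).eval R := by
  induction n using Nat.strong_induction_on with
  | _ n ih =>
  obtain _ | m := n
  · simp only [pow_zero, one_mul, touchard, eval_one, mul_one]
    rw [Real.exp_eq_exp_ℝ, NormedSpace.exp_eq_tsum_div]
  · have hshift : ∑' j : ℕ, (j:ℝ)^(m+1) * R^j / (j.factorial : ℝ)
        = ∑' j : ℕ, (((j+1 : ℕ)):ℝ)^(m+1) * R^(j+1) / (((j+1).factorial : ℕ) : ℝ) := by
      rw [Summable.tsum_eq_zero_add (summable_aux (m+1) R hR)]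
      simp
    have hterm : ∀ j : ℕ, (((j+1 : ℕ)):ℝ)^(m+1) * R^(j+1) / (((j+1).factorial : ℕ) : ℝ)
        = ∑ k ∈ Finset.range (m+1),
            ((m.choose k : ℕ) : ℝ) * R * ((j:ℝ)^k * R^j / (j.factorial : ℝ)) := by
      intro j
      have hfac : (((j+1).factorial : ℕ) : ℝ) = ((j:ℝ)+1) * (j.factorial : ℝ) := by
        rw [Nat.factorial_succ]; push_cast; ring
      have hexp : (((j:ℝ)+1))^m = ∑ k ∈ Finset.range (m+1), (j:ℝ)^k * ((m.choose k : ℕ) : ℝ) := by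
        rw [add_pow]; simp
      have h1 : ((j:ℝ)+1) ≠ 0 := by positivity
      have h2 : ((j.factorial : ℕ):ℝ) ≠ 0 := by positivity
      push_cast
      rw [hfac, pow_succ ((j:ℝ)+1) m, hexp, Finset.sum_mul, Finset.sum_mul, Finset.sum_div]
      refine Finset.sum_congr rfl fun k _ => ?_
      field_simp
      ring
    rw [hshift]
    rw [tsum_congr hterm]
    rw [Summable.tsum_finsetSum (fun k _ => ((summable_aux k R hR).mul_left (((m.choose k : ℕ) : ℝ) * R)))]
    have hsum : ∀ k ∈ Finset.range (m+1),
        ∑' j : ℕ, ((m.choose k : ℕ) : ℝ) * R * ((j:ℝ)^k * R^j / (j.factorial : ℝ))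
          = Real.exp R * R * (((m.choose k : ℕ) : ℝ) * (touchard k).eval R) := by
      intro k hk
      rw [tsum_mul_left, ih k (Finset.mem_range.mp hk)]
      ring
    rw [Finset.sum_congr rfl hsum, ← Finset.mul_sum]
    rw [show touchard (m+1) = X * (touchard m + derivative (touchard m)) from rfl]
    rw [eval_mul, eval_X, eval_add, touchard_deriv, eval_finset_sum]
    simp only [eval_mul, eval_C]
    rw [Finset.sum_range_succ, Nat.choose_self]
    push_cast
    ring

theorem statement9 (n : ℕ) (R : ℝ) (hR : 0 < R) :
    ((Polynomial.X : Polynomial ℝ) ^ n =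
      ∑ j ∈ Finset.range (n + 1),
        Polynomial.C ((Polynomial.derivative^[j] (touchard n)).eval R / (Nat.factorial j : ℝ)) *
          charlier R j) ∧
    (∑' j : ℕ, Real.exp (-R) * (j : ℝ) ^ n * R ^ j / (Nat.factorial j : ℝ)) =
      (touchard n).eval R := by
  constructor
  · simpa [dco] using part1 R n
  · have h2 : (∑' j : ℕ, Real.exp (-R) * (j:ℝ)^n * R^j / (j.factorial : ℝ))
        = Real.exp (-R) * ∑' j : ℕ, (j:ℝ)^n * R^j / (j.factorial : ℝ) := by
      rw [← tsum_mul_left]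
      exact tsum_congr fun j => by ring
    rw [h2, tsum_touchard R hR n, Real.exp_neg, ← mul_assoc,
      inv_mul_cancel₀ (Real.exp_ne_zero R), one_mul]
end
end

section
/- For every integer m ≥ 1, the optimal threshold factor satisfies R_{m,1} = m; moreover the polynomial Φ(x) = (1 + x/m)^m belongs to Π_{m,1} and satisfies R(Φ) = m. -/
open Polynomial

noncomputable section

/-- Iterated derivative of `(1 + x/m)^m`. -/
lemma iterDeriv_phi (m k : ℕ) :
    derivative^[k] (((1 : Polynomial ℝ) + C ((m : ℝ))⁻¹ * X) ^ m)
      = C ((m.descFactorial k : ℝ) * ((m : ℝ)⁻¹) ^ k)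
        * ((1 : Polynomial ℝ) + C ((m : ℝ))⁻¹ * X) ^ (m - k) := by
  induction k with
  | zero => simp
  | succ k ih =>
    have hder : derivative ((1 : Polynomial ℝ) + C ((m : ℝ))⁻¹ * X) = C ((m : ℝ))⁻¹ := by
      simp
    rw [Function.iterate_succ_apply', ih, derivative_C_mul, derivative_pow, hder,
      Nat.sub_sub,
      show ((m.descFactorial (k + 1) : ℕ) : ℝ) * ((m : ℝ)⁻¹) ^ (k + 1)
          = (m.descFactorial k : ℝ) * ((m : ℝ)⁻¹) ^ k * (((m - k : ℕ) : ℝ) * (m : ℝ)⁻¹) from by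
        rw [Nat.descFactorial_succ]; push_cast; ring,
      C_mul, C_mul]
    rw [C_mul, C_mul]
    ring

/-- The key general upper bound: any `φ ∈ Π_{m,1}` absolutely monotonic on `[-r,0]`
with `r > 0` has `r ≤ m`. -/
lemma key_upper (m : ℕ) (hm : 1 ≤ m) (φ : Polynomial ℝ) (hφ : φ ∈ PiSet m 1)
    (r : ℝ) (hr : 0 < r) (hAM : AbsolutelyMonotonicOn φ (-r) 0) : r ≤ (m : ℝ) := by
  obtain ⟨hdeg, hval⟩ := hφ
  have h0 : φ.eval 0 = 1 := by simpa using hval 0 (by norm_num)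
  have h1 : (derivative φ).eval 0 = 1 := by simpa using hval 1 le_rfl
  have hiter : ∀ (k : ℕ) (ψ : Polynomial ℝ),
      derivative^[k] ψ = (k.factorial : Polynomial ℝ) * hasseDeriv k ψ := by
    intro k ψ
    rw [← Polynomial.factorial_smul_hasseDeriv]
    simp [nsmul_eq_mul]
  set b : ℕ → ℝ := fun k => (hasseDeriv k φ).eval (-r) with hbdef
  have hb : ∀ k, 0 ≤ b k := by
    intro k
    have h := hAM k (-r) ⟨le_refl _, by linarith⟩
    rw [hiter k φ] at h
    simp only [eval_mul, eval_natCast] at h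
    have hk : (0 : ℝ) < (k.factorial : ℝ) := by positivity
    nlinarith [h]
  have hbm1 : b (m + 1) = 0 := by
    have : (taylor (-r) φ).coeff (m + 1) = 0 := by
      apply coeff_eq_zero_of_natDegree_lt
      rw [natDegree_taylor]; omega
    rwa [taylor_coeff] at this
  -- Taylor expansion of φ at -r, evaluated at 0
  have hT0 : φ.eval 0 = ∑ k ∈ Finset.range (m + 1), b k * r ^ k := by
    have hd : (taylor (-r) φ).natDegree < m + 1 := by rw [natDegree_taylor]; omega
    have := eval_eq_sum_range' hd r
    rw [taylor_eval] at this
    simp only [add_neg_cancel] at this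
    rw [this]
    exact Finset.sum_congr rfl fun k _ => by rw [taylor_coeff]
  -- Taylor expansion of φ' at -r, evaluated at 0
  set ψ := derivative φ with hψdef
  set c : ℕ → ℝ := fun k => (hasseDeriv k ψ).eval (-r) with hcdef
  have hdegψ : ψ.natDegree ≤ m := le_trans (natDegree_derivative_le φ) (by omega)
  have hT1 : ψ.eval 0 = ∑ k ∈ Finset.range (m + 1), c k * r ^ k := by
    have hd : (taylor (-r) ψ).natDegree < m + 1 := by rw [natDegree_taylor]; omega
    have := eval_eq_sum_range' hd r
    rw [taylor_eval] at this
    simp only [add_neg_cancel] at this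
    rw [this]
    exact Finset.sum_congr rfl fun k _ => by rw [taylor_coeff]
  have hc : ∀ k, c k = ((k : ℝ) + 1) * b (k + 1) := by
    intro k
    have e1 : (k.factorial : ℝ) * c k = ((k+1).factorial : ℝ) * b (k + 1) := by
      have h2 : derivative^[k] ψ = derivative^[k + 1] φ :=
        (Function.iterate_succ_apply derivative k φ).symm
      have := congrArg (fun p => eval (-r) p) h2
      simp only [hiter k ψ, hiter (k + 1) φ, eval_mul, eval_natCast] at this
      exact this
    have hk : (k.factorial : ℝ) ≠ 0 := by positivity
    have : (k.factorial : ℝ) * c k = (k.factorial : ℝ) * (((k : ℝ) + 1) * b (k + 1)) := by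
      rw [e1, Nat.factorial_succ]; push_cast; ring
    exact mul_left_cancel₀ hk this
  -- compare r * φ'(0) with m * φ(0)
  have hS : r * ψ.eval 0 = ∑ j ∈ Finset.range (m + 1), (j : ℝ) * b j * r ^ j := by
    rw [hT1, Finset.mul_sum]
    have e1 : ∑ k ∈ Finset.range (m + 1), r * (c k * r ^ k)
        = ∑ k ∈ Finset.range (m + 1), ((k : ℝ) + 1) * b (k + 1) * r ^ (k + 1) := by
      refine Finset.sum_congr rfl fun k _ => ?_
      rw [hc k]; ring
    rw [e1]
    have e2 : ∑ j ∈ Finset.range (m + 2), (j : ℝ) * b j * r ^ j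
        = (∑ k ∈ Finset.range (m + 1), ((k : ℝ) + 1) * b (k + 1) * r ^ (k + 1))
          + (0 : ℝ) * b 0 * r ^ 0 := by
      rw [Finset.sum_range_succ']
      push_cast
      ring_nf
      exact Finset.sum_congr rfl fun x _ => by ring
    have e3 : ∑ j ∈ Finset.range (m + 2), (j : ℝ) * b j * r ^ j
        = (∑ j ∈ Finset.range (m + 1), (j : ℝ) * b j * r ^ j)
          + ((m : ℝ) + 1) * b (m + 1) * r ^ (m + 1) := by
      rw [Finset.sum_range_succ]; push_cast; ring
    rw [hbm1] at e3
    simp only [mul_zero, zero_mul, add_zero, Nat.cast_zero, pow_zero, mul_one] at e2 e3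
    linarith
  have hle : ∑ j ∈ Finset.range (m + 1), (j : ℝ) * b j * r ^ j
      ≤ ∑ j ∈ Finset.range (m + 1), (m : ℝ) * (b j * r ^ j) := by
    refine Finset.sum_le_sum fun j hj => ?_
    have hjm : (j : ℝ) ≤ (m : ℝ) := by
      have := Finset.mem_range.mp hj
      exact_mod_cast Nat.lt_succ_iff.mp this
    have : (0 : ℝ) ≤ b j * r ^ j := mul_nonneg (hb j) (by positivity)
    nlinarith
  have hfin : r * ψ.eval 0 ≤ (m : ℝ) * φ.eval 0 := by
    rw [hS, hT0, ← Finset.mul_sum] at *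
    exact hle
  rw [h0, h1] at hfin
  simpa using hfin

lemma phi_mem (m : ℕ) (hm : 1 ≤ m) :
    ((1 : Polynomial ℝ) + Polynomial.C ((m : ℝ))⁻¹ * Polynomial.X) ^ m ∈ PiSet m 1 := by
  have hm0 : (m : ℝ) ≠ 0 := by positivity
  constructor
  · refine le_trans natDegree_pow_le ?_
    have h1 : ((1 : Polynomial ℝ) + C ((m : ℝ))⁻¹ * X).natDegree ≤ 1 := by
      refine le_trans (natDegree_add_le _ _) ?_
      simp only [natDegree_one, max_le_iff]
      exact ⟨Nat.zero_le 1, le_trans (natDegree_C_mul_le _ _) (by simp)⟩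
    calc m * ((1 : Polynomial ℝ) + C ((m : ℝ))⁻¹ * X).natDegree ≤ m * 1 :=
          Nat.mul_le_mul_left m h1
      _ = m := by ring
  · intro k hk
    interval_cases k
    · simp
    · rw [iterDeriv_phi m 1]
      simp [Nat.descFactorial_succ, Nat.descFactorial_zero, mul_inv_cancel₀ hm0]

lemma phi_threshold (m : ℕ) (hm : 1 ≤ m) :
    thresholdFactor (((1 : Polynomial ℝ) + Polynomial.C ((m : ℝ))⁻¹ * Polynomial.X) ^ m)
      = (m : ℝ) := by
  have hm0 : (0 : ℝ) < (m : ℝ) := by exact_mod_cast hm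
  set Φ := ((1 : Polynomial ℝ) + C ((m : ℝ))⁻¹ * X) ^ m with hΦdef
  set S := {r : ℝ | r = 0 ∨ (0 < r ∧ AbsolutelyMonotonicOn Φ (-r) 0)} with hSdef
  have hAMm : AbsolutelyMonotonicOn Φ (-(m : ℝ)) 0 := by
    intro k x hx
    rw [iterDeriv_phi m k]
    simp only [eval_mul, eval_C, eval_pow, eval_add, eval_one, eval_X]
    have h1 : (0 : ℝ) ≤ 1 + (m : ℝ)⁻¹ * x := by
      have hx1 : -(m : ℝ) ≤ x := hx.1
      have : (m : ℝ)⁻¹ * x ≥ (m : ℝ)⁻¹ * (-(m : ℝ)) := by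
        apply mul_le_mul_of_nonneg_left hx1 (by positivity)
      have h2 : (m : ℝ)⁻¹ * (-(m : ℝ)) = -1 := by field_simp
      linarith
    positivity
  have hmemS : (m : ℝ) ∈ S := Or.inr ⟨hm0, hAMm⟩
  have hub : ∀ s ∈ S, s ≤ (m : ℝ) := by
    rintro s (rfl | ⟨hs, hAM⟩)
    · exact le_of_lt hm0
    · have h := hAM (m - 1) (-s) ⟨le_refl _, by linarith⟩
      rw [iterDeriv_phi m (m - 1)] at h
      simp only [eval_mul, eval_C, eval_pow, eval_add, eval_one, eval_X] at h
      have hmsub : m - (m - 1) = 1 := by omega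
      rw [hmsub, pow_one] at h
      have hdf : 0 < (m.descFactorial (m - 1) : ℝ) := by
        have : m.descFactorial (m - 1) ≠ 0 := by
          rw [Ne, Nat.descFactorial_eq_zero_iff_lt]; omega
        exact_mod_cast Nat.pos_of_ne_zero this
      have hc : (0 : ℝ) < (m.descFactorial (m - 1) : ℝ) * ((m : ℝ)⁻¹) ^ (m - 1) := by
        positivity
      have h2 : (0 : ℝ) ≤ 1 + (m : ℝ)⁻¹ * (-s) := nonneg_of_mul_nonneg_right h hc
      have h3 : (m : ℝ)⁻¹ * s ≤ 1 := by linarith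
      calc s = (m : ℝ) * ((m : ℝ)⁻¹ * s) := by
            rw [← mul_assoc, mul_inv_cancel₀ (ne_of_gt hm0), one_mul]
        _ ≤ (m : ℝ) * 1 := by nlinarith
        _ = (m : ℝ) := mul_one _
  exact le_antisymm (csSup_le ⟨0, Or.inl rfl⟩ hub) (le_csSup ⟨(m : ℝ), hub⟩ hmemS)

theorem statement12 (m : ℕ) (hm : 1 ≤ m) :
    Ropt m 1 = (m : ℝ) ∧
    ((1 : Polynomial ℝ) + Polynomial.C ((m : ℝ))⁻¹ * Polynomial.X) ^ m ∈ PiSet m 1 ∧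
    thresholdFactor (((1 : Polynomial ℝ) + Polynomial.C ((m : ℝ))⁻¹ * Polynomial.X) ^ m)
      = (m : ℝ) := by
  have hmem := phi_mem m hm
  have htf := phi_threshold m hm
  have hm0 : (0 : ℝ) < (m : ℝ) := by exact_mod_cast hm
  refine ⟨?_, hmem, htf⟩
  have hub : ∀ y ∈ thresholdFactor '' PiSet m 1, y ≤ (m : ℝ) := by
    rintro y ⟨φ, hφ, rfl⟩
    refine csSup_le ⟨0, Or.inl rfl⟩ ?_
    rintro s (rfl | ⟨hs, hAM⟩)
    · exact le_of_lt hm0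
    · exact key_upper m hm φ hφ s hs hAM
  have hmemIm : (m : ℝ) ∈ thresholdFactor '' PiSet m 1 := ⟨_, hmem, htf⟩
  exact le_antisymm (csSup_le ⟨(m : ℝ), hmemIm⟩ hub) (le_csSup ⟨(m : ℝ), hub⟩ hmemIm)
end
end

section
/- Let q ≥ 2 be an integer and let m = q² (so m is a square integer with m ≥ 3). Then the optimal threshold factor satisfies R_{m,3} = m − q = m − √m; moreover the polynomial Φ(x) = (q/(2q−1))·(1 + x/(m−q))^{m−2q+1} + ((q−1)/(2q−1))·(1 + x/(m−q))^{m} belongs to Π_{m,3} and satisfies R(Φ) = m − q. -/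
open Polynomial

noncomputable section

lemma cast_dF1 (i : ℕ) : ((i.descFactorial 1 : ℕ) : ℝ) = i := by
  simp [Nat.descFactorial]

lemma cast_dF2 (i : ℕ) : ((i.descFactorial 2 : ℕ) : ℝ) = i * (i - 1) := by
  cases i with
  | zero => simp
  | succ n =>
    simp [Nat.descFactorial_succ, Nat.descFactorial_one]
    push_cast
    ring

lemma cast_dF3 (i : ℕ) : ((i.descFactorial 3 : ℕ) : ℝ) = i * (i - 1) * (i - 2) := by
  match i with
  | 0 => simp
  | 1 => simp [Nat.descFactorial_succ, Nat.descFactorial_one]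
  | (n+2) =>
    simp [Nat.descFactorial_succ, Nat.descFactorial_one]
    push_cast
    ring

lemma iterDadd (p q : Polynomial ℝ) (k : ℕ) :
    derivative^[k] (p + q) = derivative^[k] p + derivative^[k] q := by
  induction k generalizing p q with
  | zero => rfl
  | succ k ih =>
    rw [Function.iterate_succ_apply, Function.iterate_succ_apply,
      Function.iterate_succ_apply, derivative_add, ih]

lemma iterD (a c : ℝ) (n k : ℕ) :
    derivative^[k] (C a * ((1 : Polynomial ℝ) + C c * X) ^ n)
      = C (a * (n.descFactorial k : ℝ) * c ^ k) * ((1 : Polynomial ℝ) + C c * X) ^ (n - k) := by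
  induction k with
  | zero => simp
  | succ k ih =>
    rw [Function.iterate_succ_apply', ih, derivative_C_mul, derivative_pow]
    have hd : derivative ((1 : Polynomial ℝ) + C c * X) = C c := by
      simp
    rw [hd, Nat.descFactorial_succ, Nat.sub_sub]
    push_cast
    simp only [map_mul, map_pow]
    ring

lemma eval_iter_taylor (φ : Polynomial ℝ) (m : ℕ) (hdeg : φ.natDegree ≤ m) (r : ℝ) (k : ℕ) :
    (derivative^[k] φ).eval 0
      = ∑ i ∈ Finset.range (m+1),
          (taylor (-r) φ).coeff i * (i.descFactorial k : ℝ) * r ^ (i - k) := by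
  conv_lhs => rw [← sum_taylor_eq φ (-r)]
  rw [Polynomial.sum_over_range' _ (by simp) (m+1)
    (by rw [natDegree_taylor]; omega)]
  rw [iterate_derivative_sum, eval_finset_sum]
  refine Finset.sum_congr rfl fun i _ => ?_
  rw [show (X : Polynomial ℝ) - C (-r) = X + C r by rw [map_neg, sub_neg_eq_add]]
  rw [iterate_derivative_C_mul, iterate_derivative_X_add_pow]
  simp [mul_assoc]

lemma upper (q : ℕ) (hq : 2 ≤ q) (φ : Polynomial ℝ) (hdeg : φ.natDegree ≤ q^2)
    (hval : ∀ k ≤ 3, (derivative^[k] φ).eval 0 = 1)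
    {r : ℝ} (hr : 0 < r) (hAM : AbsolutelyMonotonicOn φ (-r) 0) :
    r ≤ (q:ℝ)^2 - q := by
  set m : ℕ := q ^ 2 with hm
  set b : ℕ → ℝ := fun i => (taylor (-r) φ).coeff i * r ^ i with hbdef
  have hb : ∀ i, 0 ≤ b i := by
    intro i
    apply mul_nonneg _ (pow_nonneg hr.le _)
    have h1 : (0:ℝ) ≤ (derivative^[i] φ).eval (-r) :=
      hAM i (-r) ⟨le_refl _, by linarith⟩
    have h2 : derivative^[i] φ = (i.factorial) • (hasseDeriv i φ) := by
      rw [← Polynomial.factorial_smul_hasseDeriv]; rfl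
    rw [h2, nsmul_eq_mul, eval_mul, eval_natCast] at h1
    rw [taylor_coeff]
    have hfac : (0:ℝ) < (i.factorial : ℝ) := by positivity
    nlinarith [h1, hfac]
  have key : ∀ k ≤ 3, r ^ k = ∑ i ∈ Finset.range (m+1), b i * (i.descFactorial k : ℝ) := by
    intro k hk
    have h0 := hval k hk
    rw [eval_iter_taylor φ m hdeg r k] at h0
    calc r ^ k = (∑ i ∈ Finset.range (m+1),
        (taylor (-r) φ).coeff i * (i.descFactorial k : ℝ) * r ^ (i - k)) * r ^ k := by
          rw [h0, one_mul]
      _ = _ := by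
          rw [Finset.sum_mul]
          refine Finset.sum_congr rfl fun i _ => ?_
          by_cases h : k ≤ i
          · have hpow : r ^ (i - k) * r ^ k = r ^ i := by
              rw [← pow_add]; congr 1; omega
            rw [mul_assoc, hpow, hbdef]
            ring
          · have hz : i.descFactorial k = 0 := Nat.descFactorial_eq_zero_iff_lt.mpr (by omega)
            simp [hz]
  have M0 : ∑ i ∈ Finset.range (m+1), b i = 1 := by
    have := key 0 (by norm_num)
    simpa using this.symm
  have M1 : ∑ i ∈ Finset.range (m+1), b i * (i:ℝ) = r := by
    have := key 1 (by norm_num)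
    rw [pow_one] at this
    rw [this]
    exact Finset.sum_congr rfl fun i _ => by rw [cast_dF1]
  have M2 : ∑ i ∈ Finset.range (m+1), b i * ((i:ℝ) * ((i:ℝ) - 1)) = r ^ 2 := by
    rw [key 2 (by norm_num)]
    exact Finset.sum_congr rfl fun i _ => by rw [cast_dF2]
  have M3 : ∑ i ∈ Finset.range (m+1), b i * ((i:ℝ) * ((i:ℝ) - 1) * ((i:ℝ) - 2)) = r ^ 3 := by
    rw [key 3 (by norm_num)]
    exact Finset.sum_congr rfl fun i _ => by rw [cast_dF3]
  set M : ℝ := (m:ℝ) - r with hM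
  have hzn : ∀ i ∈ Finset.range (m+1), (0:ℝ) ≤ (m:ℝ) - i := by
    intro i hi
    have := Finset.mem_range.mp hi
    have : (i:ℝ) ≤ (m:ℝ) := by exact_mod_cast (by omega : i ≤ m)
    linarith
  have S1 : ∑ i ∈ Finset.range (m+1), b i * ((m:ℝ) - i) = M := by
    have he : ∀ i ∈ Finset.range (m+1), b i * ((m:ℝ) - i)
        = (m:ℝ) * b i - b i * (i:ℝ) := fun i _ => by ring
    rw [Finset.sum_congr rfl he, Finset.sum_sub_distrib, ← Finset.mul_sum, M0, M1, hM]
    ring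
  have S2 : ∑ i ∈ Finset.range (m+1), b i * ((m:ℝ) - i)^2 = M^2 + r := by
    have he : ∀ i ∈ Finset.range (m+1), b i * ((m:ℝ) - i)^2
        = ((m:ℝ)^2 * b i - (2*(m:ℝ) - 1) * (b i * (i:ℝ)))
          + b i * ((i:ℝ) * ((i:ℝ) - 1)) := fun i _ => by ring
    rw [Finset.sum_congr rfl he, Finset.sum_add_distrib, Finset.sum_sub_distrib,
      ← Finset.mul_sum, ← Finset.mul_sum, M0, M1, M2, hM]
    ring
  have S3 : ∑ i ∈ Finset.range (m+1), b i * ((m:ℝ) - i)^3 = M^3 + 3*M*r - r := by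
    have he : ∀ i ∈ Finset.range (m+1), b i * ((m:ℝ) - i)^3
        = (((m:ℝ)^3 * b i - (3*(m:ℝ)^2 - 3*(m:ℝ) + 1) * (b i * (i:ℝ)))
          + (3*(m:ℝ) - 3) * (b i * ((i:ℝ) * ((i:ℝ) - 1))))
          - b i * ((i:ℝ) * ((i:ℝ) - 1) * ((i:ℝ) - 2)) := fun i _ => by ring
    rw [Finset.sum_congr rfl he, Finset.sum_sub_distrib, Finset.sum_add_distrib,
      Finset.sum_sub_distrib, ← Finset.mul_sum, ← Finset.mul_sum, ← Finset.mul_sum,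
      M0, M1, M2, M3, hM]
    ring
  have hCS : (M^2 + r)^2 ≤ M * (M^3 + 3*M*r - r) := by
    rw [← S2, ← S3, ← S1]
    refine Finset.sum_sq_le_sum_mul_sum_of_sq_eq_mul _
      (fun i hi => mul_nonneg (hb i) (hzn i hi))
      (fun i hi => mul_nonneg (hb i) (pow_nonneg (hzn i hi) 3))
      (fun i hi => by ring)
  have hM0 : 0 ≤ M := by
    rw [← S1]
    exact Finset.sum_nonneg fun i hi => mul_nonneg (hb i) (hzn i hi)
  have hmc : ((m:ℕ):ℝ) = (q:ℝ)^2 := by rw [hm]; push_cast; ring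
  have hq2 : (2:ℝ) ≤ (q:ℝ) := by exact_mod_cast hq
  have h1 : (q:ℝ)^2 ≤ M^2 := by nlinarith [hCS, hr, hM0, hmc]
  have h2 : (q:ℝ) ≤ M := by nlinarith [h1, hM0, hq2]
  rw [hM, hmc] at h2
  linarith

set_option maxHeartbeats 1000000 in
theorem statement13 (q m : ℕ) (hq : 2 ≤ q) (hm : m = q ^ 2) :
    Ropt m 3 = (m : ℝ) - (q : ℝ) ∧
    (m : ℝ) - (q : ℝ) = (m : ℝ) - Real.sqrt (m : ℝ) ∧
    (Polynomial.C ((q : ℝ) / (2 * (q : ℝ) - 1)) *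
        ((1 : Polynomial ℝ) + Polynomial.C ((m : ℝ) - (q : ℝ))⁻¹ * Polynomial.X) ^ (m - 2 * q + 1)
      + Polynomial.C (((q : ℝ) - 1) / (2 * (q : ℝ) - 1)) *
        ((1 : Polynomial ℝ) + Polynomial.C ((m : ℝ) - (q : ℝ))⁻¹ * Polynomial.X) ^ m)
      ∈ PiSet m 3 ∧
    thresholdFactor
      (Polynomial.C ((q : ℝ) / (2 * (q : ℝ) - 1)) *
        ((1 : Polynomial ℝ) + Polynomial.C ((m : ℝ) - (q : ℝ))⁻¹ * Polynomial.X) ^ (m - 2 * q + 1)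
      + Polynomial.C (((q : ℝ) - 1) / (2 * (q : ℝ) - 1)) *
        ((1 : Polynomial ℝ) + Polynomial.C ((m : ℝ) - (q : ℝ))⁻¹ * Polynomial.X) ^ m)
      = (m : ℝ) - (q : ℝ) := by
  have hq2 : (2:ℝ) ≤ (q:ℝ) := by exact_mod_cast hq
  have hmc : ((m:ℕ):ℝ) = (q:ℝ)^2 := by rw [hm]; push_cast; ring
  set Q : ℝ := (q:ℝ) with hQ
  set r : ℝ := (m:ℝ) - Q with hrdef
  have hrQ : r = Q^2 - Q := by rw [hrdef, hmc]
  have hrpos : 0 < r := by rw [hrQ]; nlinarith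
  set c : ℝ := ((m:ℝ) - Q)⁻¹ with hc
  set a1 : ℝ := Q / (2 * Q - 1) with ha1
  set a2 : ℝ := (Q - 1) / (2 * Q - 1) with ha2
  set j1 : ℕ := m - 2 * q + 1 with hj1
  set Φ : Polynomial ℝ := Polynomial.C a1 *
        ((1 : Polynomial ℝ) + Polynomial.C c * Polynomial.X) ^ j1
      + Polynomial.C a2 *
        ((1 : Polynomial ℝ) + Polynomial.C c * Polynomial.X) ^ m with hΦ
  have h2q : 2 * q ≤ m := by rw [hm]; nlinarith
  have hj1m : j1 ≤ m := by omega
  have hj1c : ((j1:ℕ):ℝ) = Q^2 - 2*Q + 1 := by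
    rw [hj1, Nat.cast_add, Nat.cast_sub h2q, hmc]
    push_cast
    ring
  have hden1 : (2 * Q - 1) ≠ 0 := by nlinarith
  have hden2 : Q^2 - Q ≠ 0 := by nlinarith
  have hcr : c = r⁻¹ := by rw [hc, hrdef]
  have hc0 : 0 ≤ c := by rw [hcr]; positivity
  have ha1p : 0 ≤ a1 := by rw [ha1]; apply div_nonneg <;> nlinarith
  have ha2p : 0 ≤ a2 := by rw [ha2]; apply div_nonneg <;> nlinarith
  -- eval of iterated derivatives at 0
  have hev : ∀ k, (derivative^[k] Φ).eval 0
      = a1 * (j1.descFactorial k : ℝ) * c ^ k + a2 * (m.descFactorial k : ℝ) * c ^ k := by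
    intro k
    rw [hΦ, iterDadd, iterD, iterD, eval_add, eval_mul, eval_mul,
      eval_C, eval_C, eval_pow, eval_pow]
    simp
  -- membership in PiSet
  have hdegP : ((1 : Polynomial ℝ) + Polynomial.C c * Polynomial.X).natDegree ≤ 1 := by
    refine le_trans (natDegree_add_le _ _) ?_
    simp only [natDegree_one, max_le_iff]
    exact ⟨by omega, le_trans (natDegree_C_mul_le _ _) (by simp)⟩
  have hdegΦ : Φ.natDegree ≤ m := by
    rw [hΦ]
    refine le_trans (natDegree_add_le _ _) (max_le ?_ ?_) <;>
      refine le_trans (natDegree_C_mul_le _ _) (le_trans natDegree_pow_le ?_)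
    · calc j1 * ((1 : Polynomial ℝ) + Polynomial.C c * Polynomial.X).natDegree
          ≤ j1 * 1 := Nat.mul_le_mul_left _ hdegP
        _ ≤ m := by omega
    · calc m * ((1 : Polynomial ℝ) + Polynomial.C c * Polynomial.X).natDegree
          ≤ m * 1 := Nat.mul_le_mul_left _ hdegP
        _ ≤ m := by omega
  have hvalΦ : ∀ k ≤ 3, (derivative^[k] Φ).eval 0 = 1 := by
    intro k hk
    rw [hev k]
    have hcQ : c = (Q^2 - Q)⁻¹ := by rw [hc, hmc]
    have hQ21 : Q * 2 - 1 ≠ 0 := by linarith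
    have hQ1 : Q - 1 ≠ 0 := by linarith
    have hQ0 : Q ≠ 0 := by linarith
    interval_cases k
    · simp [ha1, ha2]
      field_simp
      ring
    · simp only [cast_dF1, hj1c, hmc, pow_one, hcQ, ha1, ha2]
      field_simp
      ring
    · simp only [cast_dF2, hj1c, hmc, hcQ, ha1, ha2]
      field_simp
      ring
    · simp only [cast_dF3, hj1c, hmc, hcQ, ha1, ha2]
      field_simp
      ring
  have hPiΦ : Φ ∈ PiSet m 3 := ⟨hdegΦ, hvalΦ⟩
  -- absolute monotonicity of Φ on [-r, 0]
  have hAMΦ : AbsolutelyMonotonicOn Φ (-r) 0 := by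
    intro k x hx
    rw [hΦ, iterDadd, iterD, iterD, eval_add, eval_mul, eval_mul,
      eval_C, eval_C, eval_pow, eval_pow]
    have hbase : (0:ℝ) ≤ ((1 : Polynomial ℝ) + Polynomial.C c * Polynomial.X).eval x := by
      simp only [eval_add, eval_one, eval_mul, eval_C, eval_X]
      have h1 : c * (-r) ≤ c * x := mul_le_mul_of_nonneg_left hx.1 hc0
      have h2 : c * (-r) = -1 := by
        rw [hcr, mul_neg, inv_mul_cancel₀ hrpos.ne']
      linarith
    have hd1 : (0:ℝ) ≤ (j1.descFactorial k : ℝ) := Nat.cast_nonneg _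
    have hd2 : (0:ℝ) ≤ (m.descFactorial k : ℝ) := Nat.cast_nonneg _
    have hck : (0:ℝ) ≤ c ^ k := pow_nonneg hc0 k
    apply add_nonneg <;> apply mul_nonneg
    · exact mul_nonneg (mul_nonneg ha1p hd1) hck
    · exact pow_nonneg hbase _
    · exact mul_nonneg (mul_nonneg ha2p hd2) hck
    · exact pow_nonneg hbase _
  -- upper bound applies to any member
  have hub : ∀ ψ : Polynomial ℝ, ψ ∈ PiSet m 3 →
      ∀ s ∈ {s : ℝ | s = 0 ∨ (0 < s ∧ AbsolutelyMonotonicOn ψ (-s) 0)}, s ≤ r := by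
    rintro ψ hψ s (rfl | ⟨hs, hAMs⟩)
    · exact hrpos.le
    · have := upper q hq ψ (hm ▸ hψ.1) hψ.2 hs hAMs
      rw [hrQ]
      exact this
  have hTF : thresholdFactor Φ = r := by
    refine le_antisymm (csSup_le ⟨0, Or.inl rfl⟩ (hub Φ hPiΦ)) ?_
    exact le_csSup ⟨r, hub Φ hPiΦ⟩ (Or.inr ⟨hrpos, hAMΦ⟩)
  have hRopt : Ropt m 3 = r := by
    refine le_antisymm (csSup_le ⟨r, ⟨Φ, hPiΦ, hTF⟩⟩ ?_) ?_
    · rintro y ⟨ψ, hψ, rfl⟩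
      exact csSup_le ⟨0, Or.inl rfl⟩ (hub ψ hψ)
    · refine le_csSup ⟨r, ?_⟩ ⟨Φ, hPiΦ, hTF⟩
      rintro y ⟨ψ, hψ, rfl⟩
      exact csSup_le ⟨0, Or.inl rfl⟩ (hub ψ hψ)
  have hsqrt : (m : ℝ) - Q = (m : ℝ) - Real.sqrt (m : ℝ) := by
    rw [hmc, Real.sqrt_sq (by positivity : (0:ℝ) ≤ Q)]
  exact ⟨hRopt, hsqrt, hPiΦ, hTF⟩
end
end
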